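/- arXiv:1509.08287 — 5 statements merged into one kernel-verified Lean document; each statement's English description precedes it below -/
import Mathlib

section
/- Let σ be a measurable function on a domain Ω ⊂ ℝ^d (d ≥ 1) satisfying the admissibility assumptions for σ-rearrangements, and let f ∈ L¹(Ω) be nonnegative. If g ∈ L¹(Ω) is nonnegative, equimeasurable with f (i.e. μ_g = μ_f), and of the form g(x) = F(σ(x)) for some nonincreasing function F : ℝ → [0,∞), then g(x) = f^{*σ}(x) for almost every x ∈ Ω. In other words, f^{*σ} is the unique nonnegative L¹(Ω) function that is a nonincreasing function of σ(x) and equimeasurable with f. -/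
open MeasureTheory Set Filter Metric
open scoped ENNReal NNReal

noncomputable section

/-- The distribution function `μ_q(t) = meas {x ∈ Ω : q x > t}` of a function `q` on `Ω`. -/
def distFun {d : ℕ} (Ω : Set (EuclideanSpace ℝ (Fin d))) (q : EuclideanSpace ℝ (Fin d) → ℝ)
    (t : ℝ) : ℝ≥0∞ :=
  volume {x | x ∈ Ω ∧ t < q x}

/-- The pseudo-inverse `q♯(s) = inf {t ≥ 0 : μ_q(t) ≤ s}` of the distribution function. -/
def pseudoInv {d : ℕ} (Ω : Set (EuclideanSpace ℝ (Fin d))) (q : EuclideanSpace ℝ (Fin d) → ℝ)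
    (s : ℝ≥0∞) : ℝ :=
  sInf {t : ℝ | 0 ≤ t ∧ distFun Ω q t ≤ s}

/-- The Schwarz rearrangement of `q` on `Ω`: `q*(x) = q♯(meas (B(0,|x|) ∩ Ω))`. -/
def schwarzRearr {d : ℕ} (Ω : Set (EuclideanSpace ℝ (Fin d))) (q : EuclideanSpace ℝ (Fin d) → ℝ)
    (x : EuclideanSpace ℝ (Fin d)) : ℝ :=
  pseudoInv Ω q (volume (Metric.ball (0 : EuclideanSpace ℝ (Fin d)) ‖x‖ ∩ Ω))

/-- The Jacobian `a_σ(e) = meas {x ∈ Ω : σ x < e}`, with extended-real argument. -/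
def aSig {d : ℕ} (Ω : Set (EuclideanSpace ℝ (Fin d))) (σ : EuclideanSpace ℝ (Fin d) → ℝ)
    (e : EReal) : ℝ≥0∞ :=
  volume {x | x ∈ Ω ∧ (σ x : EReal) < e}

/-- `e_max = sup {e : a_σ(e) < meas Ω}`. -/
def eMax {d : ℕ} (Ω : Set (EuclideanSpace ℝ (Fin d))) (σ : EuclideanSpace ℝ (Fin d) → ℝ) :
    EReal :=
  sSup {e : EReal | aSig Ω σ e < volume Ω}

/-- `e_min = ess inf σ` on `Ω`. -/
def eMin {d : ℕ} (Ω : Set (EuclideanSpace ℝ (Fin d))) (σ : EuclideanSpace ℝ (Fin d) → ℝ) :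
    EReal :=
  essInf (fun x => (σ x : EReal)) (volume.restrict Ω)

/-- The admissibility assumptions on `σ` from Definition 1. -/
structure SigAdmissible {d : ℕ} (Ω : Set (EuclideanSpace ℝ (Fin d)))
    (σ : EuclideanSpace ℝ (Fin d) → ℝ) : Prop where
  dim_pos : 1 ≤ d
  measurableSet_Ω : MeasurableSet Ω
  measurable_σ : Measurable σ
  exists_lt : ∃ e : ℝ, aSig Ω σ (e : EReal) < volume Ω
  eMin_lt_eMax : eMin Ω σ < eMax Ω σ
  levelSets : ∀ e : ℝ, (e : EReal) < eMax Ω σ → volume {x | x ∈ Ω ∧ σ x = e} = 0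
  tendsto_eMax :
    Tendsto (fun e : ℝ => aSig Ω σ (e : EReal))
      (comap (fun e : ℝ => (e : EReal)) (nhdsWithin (eMax Ω σ) (Iio (eMax Ω σ))))
      (nhds (volume Ω))

/-- The σ-rearrangement `q^{*σ}(x) = q♯(a_σ(σ x)) · 1_{σ x < e_max}`. -/
def sigRearr {d : ℕ} (Ω : Set (EuclideanSpace ℝ (Fin d))) (σ q : EuclideanSpace ℝ (Fin d) → ℝ)
    (x : EuclideanSpace ℝ (Fin d)) : ℝ :=
  if (σ x : EReal) < eMax Ω σ then pseudoInv Ω q (aSig Ω σ (σ x : EReal)) else 0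

end

section SRAux

open scoped Topology

variable {d : ℕ} {Ω : Set (EuclideanSpace ℝ (Fin d))} {σ g f : EuclideanSpace ℝ (Fin d) → ℝ}
  {F : ℝ → ℝ}

private lemma sr_eMax_def (Ω : Set (EuclideanSpace ℝ (Fin d))) (σ : EuclideanSpace ℝ (Fin d) → ℝ) :
    eMax Ω σ = sSup {e : EReal | aSig Ω σ e < volume Ω} := rfl

private lemma sr_aSig_coe (Ω : Set (EuclideanSpace ℝ (Fin d))) (σ : EuclideanSpace ℝ (Fin d) → ℝ)
    (y : ℝ) : aSig Ω σ (y : EReal) = volume {x | x ∈ Ω ∧ σ x < y} := by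
  unfold aSig
  congr 1
  ext x
  simp [EReal.coe_lt_coe_iff]

private lemma sr_measurable_lt (hΩ : MeasurableSet Ω) (hσm : Measurable σ) (y : ℝ) :
    MeasurableSet {x | x ∈ Ω ∧ σ x < y} := by
  exact hΩ.inter (hσm measurableSet_Iio)

private lemma sr_aSig_mono (Ω : Set (EuclideanSpace ℝ (Fin d))) (σ : EuclideanSpace ℝ (Fin d) → ℝ) :
    Monotone (aSig Ω σ) := fun a b hab =>
  measure_mono fun x hx => ⟨hx.1, lt_of_lt_of_le hx.2 hab⟩

private lemma sr_aSig_mono_real (Ω : Set (EuclideanSpace ℝ (Fin d)))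
    (σ : EuclideanSpace ℝ (Fin d) → ℝ) {a b : ℝ} (hab : a ≤ b) :
    aSig Ω σ (a : EReal) ≤ aSig Ω σ (b : EReal) :=
  sr_aSig_mono Ω σ (EReal.coe_le_coe_iff.2 hab)

private lemma sr_aSig_lt_vol {e : EReal} (he : e < eMax Ω σ) : aSig Ω σ e < volume Ω := by
  rw [sr_eMax_def] at he
  obtain ⟨b, hb, heb⟩ := lt_sSup_iff.mp he
  exact lt_of_le_of_lt (sr_aSig_mono Ω σ heb.le) hb

private lemma sr_bot_lt_eMax (hσa : SigAdmissible Ω σ) : (⊥ : EReal) < eMax Ω σ := by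
  obtain ⟨e, he⟩ := hσa.exists_lt
  refine lt_of_lt_of_le (EReal.bot_lt_coe e) ?_
  rw [sr_eMax_def]
  exact le_sSup he

private lemma sr_vol_le (hσa : SigAdmissible Ω σ) {s : ℝ≥0∞}
    (h : ∀ e : ℝ, (e : EReal) < eMax Ω σ → aSig Ω σ (e : EReal) ≤ s) : volume Ω ≤ s := by
  have hnb : (Filter.comap (fun e : ℝ => (e : EReal))
      (nhdsWithin (eMax Ω σ) (Set.Iio (eMax Ω σ)))).NeBot := by
    rw [Filter.comap_neBot_iff]
    intro t ht
    obtain ⟨l, hl, hsub⟩ := (mem_nhdsLT_iff_exists_Ioo_subset' (sr_bot_lt_eMax hσa)).1 ht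
    obtain ⟨m, hm1, hm2⟩ := EReal.lt_iff_exists_real_btwn.1 hl
    exact ⟨m, hsub ⟨hm1, hm2⟩⟩
  refine le_of_tendsto hσa.tendsto_eMax ?_
  have hmem : {e : ℝ | (e : EReal) < eMax Ω σ} ∈
      Filter.comap (fun e : ℝ => (e : EReal)) (nhdsWithin (eMax Ω σ) (Set.Iio (eMax Ω σ))) :=
    Filter.preimage_mem_comap self_mem_nhdsWithin
  exact Filter.eventually_of_mem hmem fun e he => h e he

private lemma sr_vol_eMax (hσa : SigAdmissible Ω σ) :
    volume {x | x ∈ Ω ∧ (σ x : EReal) < eMax Ω σ} = volume Ω := by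
  refine le_antisymm (measure_mono fun x hx => hx.1) (sr_vol_le hσa fun e he => measure_mono ?_)
  exact fun x hx => ⟨hx.1, hx.2.trans he⟩

private lemma sr_lt_eMax_of_aSig_lt (hσa : SigAdmissible Ω σ) {y : ℝ}
    (h : aSig Ω σ (y : EReal) < volume Ω) : (y : EReal) < eMax Ω σ := by
  have hle : (y : EReal) ≤ eMax Ω σ := by rw [sr_eMax_def]; exact le_sSup h
  rcases lt_or_eq_of_le hle with hlt | heq
  · exact hlt
  · exfalso
    have hv : volume Ω ≤ aSig Ω σ (y : EReal) := by
      refine sr_vol_le hσa fun e he => sr_aSig_mono Ω σ ?_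
      rw [← heq] at he
      exact he.le
    exact absurd h (not_lt.2 hv)

private lemma sr_distFun_le_aSig (hgF : ∀ x ∈ Ω, g x = F (σ x)) (hF_anti : Antitone F) (y : ℝ) :
    distFun Ω g (F y) ≤ aSig Ω σ (y : EReal) := by
  rw [sr_aSig_coe]
  refine measure_mono fun x hx => ⟨hx.1, ?_⟩
  by_contra hcon
  push_neg at hcon
  have h1 : F y < F (σ x) := by rw [← hgF x hx.1]; exact hx.2
  exact absurd h1 (not_lt.2 (hF_anti hcon))

private lemma sr_aSig_le_distFun (hgF : ∀ x ∈ Ω, g x = F (σ x)) (hF_anti : Antitone F)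
    {y t : ℝ} (ht : t < F y) : aSig Ω σ (y : EReal) ≤ distFun Ω g t := by
  rw [sr_aSig_coe]
  refine measure_mono fun x hx => ⟨hx.1, ?_⟩
  rw [hgF x hx.1]
  exact lt_of_lt_of_le ht (hF_anti hx.2.le)

private lemma sr_mem_T (hgF : ∀ x ∈ Ω, g x = F (σ x)) (hF_anti : Antitone F)
    (hF_nonneg : ∀ y : ℝ, 0 ≤ F y) (y : ℝ) :
    F y ∈ {t : ℝ | 0 ≤ t ∧ distFun Ω g t ≤ aSig Ω σ (y : EReal)} :=
  ⟨hF_nonneg y, sr_distFun_le_aSig hgF hF_anti y⟩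

private lemma sr_pseudoInv_le (hgF : ∀ x ∈ Ω, g x = F (σ x)) (hF_anti : Antitone F)
    (hF_nonneg : ∀ y : ℝ, 0 ≤ F y) (y : ℝ) :
    pseudoInv Ω g (aSig Ω σ (y : EReal)) ≤ F y :=
  csInf_le ⟨0, fun t ht => ht.1⟩ (sr_mem_T hgF hF_anti hF_nonneg y)

private lemma sr_pseudoInv_top (Ω : Set (EuclideanSpace ℝ (Fin d)))
    (q : EuclideanSpace ℝ (Fin d) → ℝ) : pseudoInv Ω q ⊤ = 0 := by
  unfold pseudoInv
  have h : {t : ℝ | 0 ≤ t ∧ distFun Ω q t ≤ ⊤} = Set.Ici 0 := by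
    ext t; simp [le_top]
  rw [h, csInf_Ici]

private lemma sr_pseudoInv_congr (h_equi : ∀ t : ℝ, 0 ≤ t → distFun Ω g t = distFun Ω f t)
    (s : ℝ≥0∞) : pseudoInv Ω g s = pseudoInv Ω f s := by
  unfold pseudoInv
  congr 1
  ext t
  exact and_congr_right fun ht => by rw [h_equi t ht]

private lemma sr_finite_of_lower (hΩ : MeasurableSet Ω) (hσm : Measurable σ)
    (hg_int : MeasureTheory.IntegrableOn g Ω) {c y : ℝ} (hc : 0 < c)
    (hlow : ∀ x ∈ Ω, σ x < y → c ≤ g x) :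
    aSig Ω σ (y : EReal) ≠ ⊤ := by
  intro htop
  rw [sr_aSig_coe] at htop
  have hE : MeasurableSet {x | x ∈ Ω ∧ σ x < y} := sr_measurable_lt hΩ hσm y
  have h1 : ENNReal.ofReal c * volume {x | x ∈ Ω ∧ σ x < y} ≤ ∫⁻ x in Ω, ‖g x‖₊ ∂volume := by
    calc ENNReal.ofReal c * volume {x | x ∈ Ω ∧ σ x < y}
        = ∫⁻ _ in {x | x ∈ Ω ∧ σ x < y}, ENNReal.ofReal c ∂volume := by
          rw [MeasureTheory.setLIntegral_const, mul_comm]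
      _ ≤ ∫⁻ x in {x | x ∈ Ω ∧ σ x < y}, (‖g x‖₊ : ℝ≥0∞) ∂volume := by
          refine MeasureTheory.setLIntegral_mono' hE fun x hx => ?_
          have hcg : c ≤ g x := hlow x hx.1 hx.2
          rw [← enorm_eq_nnnorm, Real.enorm_eq_ofReal (hc.le.trans hcg)]
          exact ENNReal.ofReal_le_ofReal hcg
      _ ≤ ∫⁻ x in Ω, (‖g x‖₊ : ℝ≥0∞) ∂volume :=
          MeasureTheory.lintegral_mono_set fun x hx => hx.1
  rw [htop, ENNReal.mul_top (by simp [hc])] at h1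
  have h2 : (∫⁻ x in Ω, (‖g x‖₊ : ℝ≥0∞) ∂volume) < ⊤ := hg_int.2
  exact absurd (le_antisymm le_top (le_trans h1 (le_refl _))) (by
    intro h; rw [h] at h2; exact lt_irrefl _ h2)

private lemma sr_binf_null (hσa : SigAdmissible Ω σ) (hg_int : MeasureTheory.IntegrableOn g Ω)
    (hgF : ∀ x ∈ Ω, g x = F (σ x)) (hF_anti : Antitone F) :
    volume {x | x ∈ Ω ∧ (σ x : EReal) < eMax Ω σ ∧ aSig Ω σ (σ x : EReal) = ⊤ ∧ 0 < F (σ x)}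
      = 0 := by
  set B := {x | x ∈ Ω ∧ (σ x : EReal) < eMax Ω σ ∧ aSig Ω σ (σ x : EReal) = ⊤ ∧ 0 < F (σ x)}
    with hB
  have key : ∀ x ∈ B, ∀ x' ∈ B, ¬ σ x < σ x' := by
    intro x hx x' hx' hlt
    refine sr_finite_of_lower hσa.measurableSet_Ω hσa.measurable_σ hg_int hx'.2.2.2
      (y := σ x) (fun z hz hzlt => ?_) hx.2.2.1
    rw [hgF z hz]
    exact hF_anti (hzlt.le.trans hlt.le)
  rcases Set.eq_empty_or_nonempty B with h | ⟨x0, hx0⟩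
  · simp [h]
  · have hsub : B ⊆ {x | x ∈ Ω ∧ σ x = σ x0} := by
      intro x hx
      refine ⟨hx.1, ?_⟩
      rcases lt_trichotomy (σ x) (σ x0) with h | h | h
      · exact absurd h (key x hx x0 hx0)
      · exact h
      · exact absurd h (key x0 hx0 x hx)
    exact measure_mono_null hsub (hσa.levelSets (σ x0) hx0.2.1)

private lemma sr_levelA_null (hσa : SigAdmissible Ω σ) {s : ℝ≥0∞} (hs : s ≠ ⊤) :
    volume {x | x ∈ Ω ∧ (σ x : EReal) < eMax Ω σ ∧ aSig Ω σ (σ x : EReal) = s} = 0 := by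
  set M := {x | x ∈ Ω ∧ (σ x : EReal) < eMax Ω σ ∧ aSig Ω σ (σ x : EReal) = s} with hMdef
  rcases Set.eq_empty_or_nonempty M with h | ⟨x0, hx0⟩
  · simp [h]
  have hsΩ : s < volume Ω := by
    have := sr_aSig_lt_vol hx0.2.1
    rwa [hx0.2.2] at this
  have hkey : ∀ y : ℝ, aSig Ω σ (y : EReal) = s → (y : EReal) < eMax Ω σ := fun y hy =>
    sr_lt_eMax_of_aSig_lt hσa (by rw [hy]; exact hsΩ)
  have hsand : ∀ y1 y2 z : ℝ, aSig Ω σ (y1 : EReal) = s → aSig Ω σ (y2 : EReal) = s →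
      y1 ≤ z → z ≤ y2 → aSig Ω σ (z : EReal) = s := by
    intro y1 y2 z h1 h2 hz1 hz2
    refine le_antisymm ?_ ?_
    · rw [← h2]; exact sr_aSig_mono_real Ω σ hz2
    · rw [← h1]; exact sr_aSig_mono_real Ω σ hz1
  set T : ℚ × ℚ → Set (EuclideanSpace ℝ (Fin d)) := fun p =>
    {x | x ∈ Ω ∧ aSig Ω σ ((p.1 : ℝ) : EReal) = s ∧ aSig Ω σ ((p.2 : ℝ) : EReal) = s ∧
      (p.2 : ℝ) ≤ σ x ∧ σ x < (p.1 : ℝ)} with hT_def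
  set W1 := {x | x ∈ M ∧ ∀ r : ℚ, aSig Ω σ ((r : ℝ) : EReal) = s → (r : ℝ) ≤ σ x} with hW1def
  set W2 := {x | x ∈ M ∧ ∀ r : ℚ, aSig Ω σ ((r : ℝ) : EReal) = s → σ x < (r : ℝ)} with hW2def
  have hcover : M ⊆ (⋃ p : ℚ × ℚ, T p) ∪ (W1 ∪ W2) := by
    intro x hx
    by_cases h1 : ∃ r : ℚ, aSig Ω σ ((r : ℝ) : EReal) = s ∧ σ x < (r : ℝ)
    · by_cases h2 : ∃ r : ℚ, aSig Ω σ ((r : ℝ) : EReal) = s ∧ (r : ℝ) ≤ σ x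
      · obtain ⟨r1, hr1, hr1'⟩ := h1
        obtain ⟨r2, hr2, hr2'⟩ := h2
        refine Set.mem_union_left _ (Set.mem_iUnion.2 ⟨(r1, r2), ?_⟩)
        exact ⟨hx.1, hr1, hr2, hr2', hr1'⟩
      · push_neg at h2
        refine Set.mem_union_right _ (Set.mem_union_right _ ?_)
        exact ⟨hx, fun r hr => h2 r hr⟩
    · push_neg at h1
      refine Set.mem_union_right _ (Set.mem_union_left _ ?_)
      exact ⟨hx, fun r hr => h1 r hr⟩
  have hT : ∀ p : ℚ × ℚ, volume (T p) = 0 := by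
    intro p
    by_cases hps : aSig Ω σ ((p.1 : ℝ) : EReal) = s ∧ aSig Ω σ ((p.2 : ℝ) : EReal) = s
    · rcases le_or_gt (p.2 : ℝ) (p.1 : ℝ) with hle | hlt
      · have hsub : T p ⊆ {x | x ∈ Ω ∧ σ x < (p.1 : ℝ)} \ {x | x ∈ Ω ∧ σ x < (p.2 : ℝ)} :=
          fun x hx => ⟨⟨hx.1, hx.2.2.2.2⟩, fun hc => absurd hx.2.2.2.1 (not_le.2 hc.2)⟩
        refine measure_mono_null hsub ?_
        have hCD : {x | x ∈ Ω ∧ σ x < (p.2 : ℝ)} ⊆ {x | x ∈ Ω ∧ σ x < (p.1 : ℝ)} :=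
          fun x hx => ⟨hx.1, lt_of_lt_of_le hx.2 hle⟩
        rw [measure_diff hCD
          ((sr_measurable_lt hσa.measurableSet_Ω hσa.measurable_σ (p.2 : ℝ)).nullMeasurableSet)
          (by rw [← sr_aSig_coe, hps.2]; exact hs)]
        rw [← sr_aSig_coe, ← sr_aSig_coe, hps.1, hps.2, tsub_self]
      · have hempty : T p = ∅ := by
          refine Set.eq_empty_of_forall_notMem fun x hx => ?_
          have := hx.2.2.2.1.trans_lt hx.2.2.2.2
          exact absurd hlt (not_lt.2 this.le)
        simp [hempty]
    · have hempty : T p = ∅ :=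
        Set.eq_empty_of_forall_notMem fun x hx => hps ⟨hx.2.1, hx.2.2.1⟩
      simp [hempty]
  have hW1 : volume W1 = 0 := by
    rcases Set.eq_empty_or_nonempty W1 with h | ⟨z0, hz0⟩
    · simp [h]
    · have hsub : W1 ⊆ {x | x ∈ Ω ∧ σ x = σ z0} := by
        intro x hx
        refine ⟨hx.1.1, ?_⟩
        rcases lt_trichotomy (σ x) (σ z0) with h | h | h
        · obtain ⟨q, hq1, hq2⟩ := exists_rat_btwn h
          have hqs : aSig Ω σ ((q : ℝ) : EReal) = s :=
            hsand (σ x) (σ z0) q hx.1.2.2 hz0.1.2.2 hq1.le hq2.le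
          exact absurd (hx.2 q hqs) (not_le.2 hq1)
        · exact h
        · obtain ⟨q, hq1, hq2⟩ := exists_rat_btwn h
          have hqs : aSig Ω σ ((q : ℝ) : EReal) = s :=
            hsand (σ z0) (σ x) q hz0.1.2.2 hx.1.2.2 hq1.le hq2.le
          exact absurd (hz0.2 q hqs) (not_le.2 hq1)
      exact measure_mono_null hsub (hσa.levelSets (σ z0) hz0.1.2.1)
  have hW2 : volume W2 = 0 := by
    rcases Set.eq_empty_or_nonempty W2 with h | ⟨z0, hz0⟩
    · simp [h]
    · have hsub : W2 ⊆ {x | x ∈ Ω ∧ σ x = σ z0} := by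
        intro x hx
        refine ⟨hx.1.1, ?_⟩
        rcases lt_trichotomy (σ x) (σ z0) with h | h | h
        · obtain ⟨q, hq1, hq2⟩ := exists_rat_btwn h
          have hqs : aSig Ω σ ((q : ℝ) : EReal) = s :=
            hsand (σ x) (σ z0) q hx.1.2.2 hz0.1.2.2 hq1.le hq2.le
          exact absurd (hz0.2 q hqs) (not_lt.2 hq2.le)
        · exact h
        · obtain ⟨q, hq1, hq2⟩ := exists_rat_btwn h
          have hqs : aSig Ω σ ((q : ℝ) : EReal) = s :=
            hsand (σ z0) (σ x) q hz0.1.2.2 hx.1.2.2 hq1.le hq2.le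
          exact absurd (hx.2 q hqs) (not_lt.2 hq2.le)
      exact measure_mono_null hsub (hσa.levelSets (σ z0) hz0.1.2.1)
  refine measure_mono_null hcover ?_
  exact measure_union_null (measure_iUnion_null hT) (measure_union_null hW1 hW2)

private lemma sr_top_null (hσa : SigAdmissible Ω σ) (hg_int : MeasureTheory.IntegrableOn g Ω)
    (hg_nonneg : ∀ x ∈ Ω, 0 ≤ g x) (hgF : ∀ x ∈ Ω, g x = F (σ x)) (hF_anti : Antitone F) :
    volume {x | x ∈ Ω ∧ ¬ ((σ x : EReal) < eMax Ω σ) ∧ g x ≠ 0} = 0 := by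
  set B := {x | x ∈ Ω ∧ ¬ ((σ x : EReal) < eMax Ω σ) ∧ g x ≠ 0} with hBdef
  rcases eq_or_ne (eMax Ω σ) ⊤ with htop | hne
  · have hempty : B = ∅ := Set.eq_empty_of_forall_notMem fun x hx =>
      hx.2.1 (by rw [htop]; exact EReal.coe_lt_top _)
    simp [hempty]
  · have hbot : eMax Ω σ ≠ ⊥ := (sr_bot_lt_eMax hσa).ne'
    set m := (eMax Ω σ).toReal with hmdef
    have hm : (m : EReal) = eMax Ω σ := EReal.coe_toReal hne hbot
    have hset : {x | x ∈ Ω ∧ (σ x : EReal) < eMax Ω σ} = {x | x ∈ Ω ∧ σ x < m} := by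
      ext x
      rw [← hm]
      simp [EReal.coe_lt_coe_iff]
    by_cases hFm : F m ≤ 0
    · have hempty : B = ∅ := by
        refine Set.eq_empty_of_forall_notMem fun x hx => ?_
        have h1 : m ≤ σ x := by
          by_contra hcon
          push_neg at hcon
          exact hx.2.1 (by rw [← hm]; exact EReal.coe_lt_coe_iff.2 hcon)
        exact hx.2.2 (le_antisymm (by rw [hgF x hx.1]; exact (hF_anti h1).trans hFm)
          (hg_nonneg x hx.1))
      simp [hempty]
    · push_neg at hFm
      have hAm : volume {x | x ∈ Ω ∧ σ x < m} = volume Ω := by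
        rw [← hset]
        exact sr_vol_eMax hσa
      have hfin : volume {x | x ∈ Ω ∧ σ x < m} ≠ ⊤ := by
        rw [← sr_aSig_coe]
        exact sr_finite_of_lower hσa.measurableSet_Ω hσa.measurable_σ hg_int hFm
          (fun z hz hzlt => by rw [hgF z hz]; exact hF_anti hzlt.le)
      have hsub : B ⊆ Ω \ {x | x ∈ Ω ∧ σ x < m} := by
        intro x hx
        refine ⟨hx.1, fun hc => ?_⟩
        exact hx.2.1 (by rw [← hm]; exact EReal.coe_lt_coe_iff.2 hc.2)
      refine measure_mono_null hsub ?_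
      rw [measure_diff (fun x hx => hx.1)
        ((sr_measurable_lt hσa.measurableSet_Ω hσa.measurable_σ m).nullMeasurableSet) hfin,
        hAm, tsub_self]

end SRAux

/-- `f^{*σ}` is the unique nonnegative `L¹(Ω)` function that is a
nonincreasing function of `σ(x)` and equimeasurable with `f`: any such `g` coincides
a.e. on `Ω` with `f^{*σ}`. -/
theorem sigmaRearr_unique {d : ℕ} (Ω : Set (EuclideanSpace ℝ (Fin d)))
    (σ : EuclideanSpace ℝ (Fin d) → ℝ) (hσ : SigAdmissible Ω σ)
    (f : EuclideanSpace ℝ (Fin d) → ℝ) (hf_nonneg : ∀ x ∈ Ω, 0 ≤ f x)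
    (hf_int : MeasureTheory.IntegrableOn f Ω)
    (g : EuclideanSpace ℝ (Fin d) → ℝ) (hg_nonneg : ∀ x ∈ Ω, 0 ≤ g x)
    (hg_int : MeasureTheory.IntegrableOn g Ω)
    (F : ℝ → ℝ) (hF_anti : Antitone F) (hF_nonneg : ∀ y : ℝ, 0 ≤ F y)
    (hgF : ∀ x ∈ Ω, g x = F (σ x))
    (h_equi : ∀ t : ℝ, 0 ≤ t → distFun Ω g t = distFun Ω f t) :
    ∀ᵐ x ∂(volume.restrict Ω), g x = sigRearr Ω σ f x := by
  classical
  set B1 := {x | x ∈ Ω ∧ ¬ ((σ x : EReal) < eMax Ω σ) ∧ g x ≠ 0} with hB1def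
  set B2 := {x | x ∈ Ω ∧ (σ x : EReal) < eMax Ω σ ∧ aSig Ω σ (σ x : EReal) = ⊤ ∧ 0 < F (σ x)}
    with hB2def
  set B3 : ℚ → Set (EuclideanSpace ℝ (Fin d)) := fun q =>
    {x | x ∈ Ω ∧ (σ x : EReal) < eMax Ω σ ∧ aSig Ω σ (σ x : EReal) = distFun Ω g (q : ℝ) ∧
      distFun Ω g (q : ℝ) ≠ ⊤} with hB3def
  have hB3 : ∀ q : ℚ, volume (B3 q) = 0 := by
    intro q
    by_cases hq : distFun Ω g (q : ℝ) = ⊤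
    · have hempty : B3 q = ∅ := Set.eq_empty_of_forall_notMem fun x hx => hx.2.2.2 hq
      simp [hempty]
    · refine measure_mono_null ?_ (sr_levelA_null hσ hq)
      exact fun x hx => ⟨hx.1, hx.2.1, hx.2.2.1⟩
  have hnull : volume (B1 ∪ (B2 ∪ ⋃ q : ℚ, B3 q)) = 0 :=
    measure_union_null (sr_top_null hσ hg_int hg_nonneg hgF hF_anti)
      (measure_union_null (sr_binf_null hσ hg_int hgF hF_anti) (measure_iUnion_null hB3))
  rw [MeasureTheory.ae_restrict_iff' hσ.measurableSet_Ω, MeasureTheory.ae_iff]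
  refine measure_mono_null ?_ hnull
  intro x hx
  simp only [Set.mem_setOf_eq] at hx
  push_neg at hx
  obtain ⟨hxΩ, hne⟩ := hx
  by_cases hlt : (σ x : EReal) < eMax Ω σ
  · have hsig : sigRearr Ω σ f x = pseudoInv Ω g (aSig Ω σ (σ x : EReal)) := by
      simp only [sigRearr, if_pos hlt]
      exact (sr_pseudoInv_congr h_equi _).symm
    by_cases htop : aSig Ω σ (σ x : EReal) = ⊤
    · refine Set.mem_union_right _ (Set.mem_union_left _ ?_)
      refine ⟨hxΩ, hlt, htop, ?_⟩
      rcases lt_or_eq_of_le (hF_nonneg (σ x)) with h | h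
      · exact h
      · exfalso
        apply hne
        rw [hsig, htop, sr_pseudoInv_top, hgF x hxΩ, ← h]
    · have hle : pseudoInv Ω g (aSig Ω σ (σ x : EReal)) ≤ F (σ x) :=
        sr_pseudoInv_le hgF hF_anti hF_nonneg (σ x)
      have hlt2 : pseudoInv Ω g (aSig Ω σ (σ x : EReal)) < F (σ x) := by
        rcases lt_or_eq_of_le hle with h | h
        · exact h
        · exact absurd (by rw [hsig, h, ← hgF x hxΩ]) hne
      obtain ⟨q, hq1, hq2⟩ := exists_rat_btwn hlt2
      have hge : aSig Ω σ (σ x : EReal) ≤ distFun Ω g (q : ℝ) :=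
        sr_aSig_le_distFun hgF hF_anti hq2
      have hle2 : distFun Ω g (q : ℝ) ≤ aSig Ω σ (σ x : EReal) := by
        have hne' : {t : ℝ | 0 ≤ t ∧ distFun Ω g t ≤ aSig Ω σ (σ x : EReal)}.Nonempty :=
          ⟨F (σ x), sr_mem_T hgF hF_anti hF_nonneg (σ x)⟩
        have hq1' : sInf {t : ℝ | 0 ≤ t ∧ distFun Ω g t ≤ aSig Ω σ (σ x : EReal)} < (q : ℝ) := hq1
        obtain ⟨t, ht, htq⟩ := exists_lt_of_csInf_lt hne' hq1'
        refine le_trans ?_ ht.2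
        exact measure_mono fun z hz => ⟨hz.1, htq.trans hz.2⟩
      have heq : aSig Ω σ (σ x : EReal) = distFun Ω g (q : ℝ) := le_antisymm hge hle2
      refine Set.mem_union_right _ (Set.mem_union_right _ (Set.mem_iUnion.2 ⟨q, ?_⟩))
      exact ⟨hxΩ, hlt, heq, by rw [← heq]; exact htop⟩
  · refine Set.mem_union_left _ ⟨hxΩ, hlt, fun h0 => hne ?_⟩
    rw [h0]
    simp only [sigRearr, if_neg hlt]
end

section
/- Let σ be a measurable function on a domain Ω ⊂ ℝ^d (d ≥ 1) satisfying the admissibility assumptions for σ-rearrangements, and assume that B_σ(μ) = ∫_{{x : a_σ(σ(x)) < μ}} σ(x) dx is finite for every μ ∈ [0, meas(Ω)). Then the function B_σ is convex on [0, meas(Ω)). -/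
open MeasureTheory Set Filter Metric
open scoped ENNReal NNReal

noncomputable section

/-- The pseudo-inverse `b_σ(μ) = sup {t < e_max : a_σ(t) ≤ μ}` of `a_σ`
(equal to `⊥ = -∞` if the set is empty). -/
def bSig {d : ℕ} (Ω : Set (EuclideanSpace ℝ (Fin d))) (σ : EuclideanSpace ℝ (Fin d) → ℝ)
    (μ : ℝ≥0∞) : EReal :=
  sSup {t : EReal | t < eMax Ω σ ∧ aSig Ω σ t ≤ μ}

/-- `B_σ(μ) = ∫_{a_σ(σ(x)) < μ} σ(x) dx`, for a real argument `μ`. -/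
def BSig {d : ℕ} (Ω : Set (EuclideanSpace ℝ (Fin d))) (σ : EuclideanSpace ℝ (Fin d) → ℝ)
    (μ : ℝ) : ℝ :=
  ∫ x in {x | x ∈ Ω ∧ aSig Ω σ (σ x : EReal) < ENNReal.ofReal μ}, σ x

/-- Finiteness of `B_σ(μ)` for all `μ ∈ [0, meas Ω)`, expressed as integrability of `σ`
on the corresponding sublevel sets. -/
def BSigFinite {d : ℕ} (Ω : Set (EuclideanSpace ℝ (Fin d)))
    (σ : EuclideanSpace ℝ (Fin d) → ℝ) : Prop :=
  ∀ μ : ℝ, 0 ≤ μ → ENNReal.ofReal μ < volume Ω →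
    MeasureTheory.IntegrableOn σ {x | x ∈ Ω ∧ aSig Ω σ (σ x : EReal) < ENNReal.ofReal μ}

/-- `H_σ(μ) = inf_{0 < s ≤ μ} (B_σ(μ+s) + B_σ(μ-s) - 2B_σ(μ))/s²`. -/
def HSig {d : ℕ} (Ω : Set (EuclideanSpace ℝ (Fin d))) (σ : EuclideanSpace ℝ (Fin d) → ℝ)
    (μ : ℝ) : ℝ :=
  sInf ((fun s => (BSig Ω σ (μ + s) + BSig Ω σ (μ - s) - 2 * BSig Ω σ μ) / s ^ 2) '' Ioc 0 μ)

/-- `K(q*, σ) = 4 ∫₀^{‖q‖_∞} dt / H_σ(μ_q(t))` (the integrand vanishes for `t ≥ ‖q‖_∞`). -/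
def Kconst {d : ℕ} (Ω : Set (EuclideanSpace ℝ (Fin d))) (σ q : EuclideanSpace ℝ (Fin d) → ℝ) :
    ℝ≥0∞ :=
  4 * ∫⁻ t in Ioi (0 : ℝ), ENNReal.ofReal ((HSig Ω σ ((distFun Ω q t).toReal))⁻¹)

/-- `β_{f,g}(s) = meas {x ∈ Ω : f x ≤ s < g x}`. -/
def betaFun {d : ℕ} (Ω : Set (EuclideanSpace ℝ (Fin d))) (f g : EuclideanSpace ℝ (Fin d) → ℝ)
    (s : ℝ) : ℝ≥0∞ :=
  volume {x | x ∈ Ω ∧ f x ≤ s ∧ s < g x}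

end


noncomputable section AuxProof

namespace BSigAux

variable {d : ℕ} (Ω : Set (EuclideanSpace ℝ (Fin d))) (σ : EuclideanSpace ℝ (Fin d) → ℝ)

/-- The Jacobian with a real argument. -/
def aR (e : ℝ) : ℝ≥0∞ := volume {x | x ∈ Ω ∧ σ x < e}

lemma aSig_coe (e : ℝ) : aSig Ω σ (e : EReal) = aR Ω σ e := by
  simp only [aSig, aR, EReal.coe_lt_coe_iff]

lemma aR_mono : Monotone (aR Ω σ) := fun a b hab =>
  measure_mono fun x hx => ⟨hx.1, lt_of_lt_of_le hx.2 hab⟩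

/-- The sublevel set appearing in the definition of `BSig`. -/
def Aset (μ : ℝ) : Set (EuclideanSpace ℝ (Fin d)) :=
  {x | x ∈ Ω ∧ aSig Ω σ (σ x : EReal) < ENNReal.ofReal μ}

lemma BSig_eq (μ : ℝ) : BSig Ω σ μ = ∫ x in Aset Ω σ μ, σ x := rfl

lemma mem_Aset_iff (μ : ℝ) (x : EuclideanSpace ℝ (Fin d)) :
    x ∈ Aset Ω σ μ ↔ x ∈ Ω ∧ aR Ω σ (σ x) < ENNReal.ofReal μ := by
  rw [Aset, mem_setOf_eq, aSig_coe]

lemma Aset_mono {μ ν : ℝ} (h : μ ≤ ν) : Aset Ω σ μ ⊆ Aset Ω σ ν := fun x hx =>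
  ⟨hx.1, lt_of_lt_of_le hx.2 (ENNReal.ofReal_le_ofReal h)⟩

lemma measurableSet_Aset (hσ : SigAdmissible Ω σ) (μ : ℝ) :
    MeasurableSet (Aset Ω σ μ) := by
  have : Aset Ω σ μ = Ω ∩ σ ⁻¹' {e : ℝ | aR Ω σ e < ENNReal.ofReal μ} := by
    ext x
    rw [mem_Aset_iff]
    rfl
  rw [this]
  refine hσ.measurableSet_Ω.inter (hσ.measurable_σ ?_)
  have hoc : OrdConnected {e : ℝ | aR Ω σ e < ENNReal.ofReal μ} := by
    constructor
    intro a _ b hb c hc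
    exact lt_of_le_of_lt (aR_mono Ω σ hc.2) hb
  exact hoc.measurableSet

/-- `eMax` cannot equal a real number `e` with `a_σ(e) < meas Ω`. -/
lemma eMax_ne_coe (hσ : SigAdmissible Ω σ) (e : ℝ) (he : aR Ω σ e < volume Ω) :
    eMax Ω σ ≠ (e : EReal) := by
  intro heq
  -- a sequence of reals approaching `e` from below inside `EReal`
  have hto : Tendsto (fun n : ℕ => (e - 1 / (n + 1) : ℝ)) atTop (nhds e) := by
    have := tendsto_const_nhds (x := e) (f := atTop (α := ℕ))
    have h2 := this.sub tendsto_one_div_add_atTop_nhds_zero_nat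
    simpa using h2
  have hseq : Tendsto (fun n : ℕ => ((e - 1 / (n + 1) : ℝ) : EReal)) atTop
      (nhdsWithin (e : EReal) (Iio (e : EReal))) := by
    apply tendsto_nhdsWithin_of_tendsto_nhds_of_eventually_within
    · exact (continuous_coe_real_ereal.tendsto e).comp hto
    · refine Eventually.of_forall fun n => ?_
      have : (0:ℝ) < 1 / (n + 1) := by positivity
      simp only [mem_Iio, EReal.coe_lt_coe_iff]
      linarith
  have hnb : (comap (fun u : ℝ => (u : EReal))
      (nhdsWithin (eMax Ω σ) (Iio (eMax Ω σ)))).NeBot := by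
    rw [heq]
    refine Filter.comap_neBot fun t ht => ?_
    have hev : ∀ᶠ n : ℕ in atTop, ((e - 1 / (n + 1) : ℝ) : EReal) ∈ t := hseq ht
    obtain ⟨n, hn⟩ := hev.exists
    exact ⟨_, hn⟩
  have hT := hσ.tendsto_eMax
  have h1 : ∀ᶠ u : ℝ in comap (fun u : ℝ => (u : EReal))
      (nhdsWithin (eMax Ω σ) (Iio (eMax Ω σ))), aR Ω σ e < aSig Ω σ (u : EReal) :=
    hT.eventually (eventually_mem_set.2 (Ioi_mem_nhds he))
  have h2 : ∀ᶠ u : ℝ in comap (fun u : ℝ => (u : EReal))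
      (nhdsWithin (eMax Ω σ) (Iio (eMax Ω σ))), (u : EReal) < eMax Ω σ :=
    preimage_mem_comap self_mem_nhdsWithin
  obtain ⟨u, hu1, hu2⟩ := (h1.and h2).exists
  rw [heq, EReal.coe_lt_coe_iff] at hu2
  rw [aSig_coe] at hu1
  exact absurd (aR_mono Ω σ hu2.le) (not_le.2 hu1)

/-- The key structural lemma: for `0 < μ` with `ofReal μ < meas Ω`, the sublevel set
`Aset μ` has measure exactly `ofReal μ`, and there is a real constant `c` such that
`σ ≤ c` on `Aset μ` and `σ ≥ c` on `Ω \ Aset μ`. -/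
lemma key (hσ : SigAdmissible Ω σ) {μ : ℝ} (hμ0 : 0 < μ)
    (hμ : ENNReal.ofReal μ < volume Ω) :
    ∃ c : ℝ, volume (Aset Ω σ μ) = ENNReal.ofReal μ ∧
      (∀ x ∈ Aset Ω σ μ, σ x ≤ c) ∧
      (∀ x ∈ Ω, x ∉ Aset Ω σ μ → c ≤ σ x) := by
  set m := ENNReal.ofReal μ with hm
  have hm0 : 0 < m := ENNReal.ofReal_pos.2 hμ0
  set T : Set ℝ := {e : ℝ | aR Ω σ e < m} with hT
  -- T is nonempty
  have hTne : T.Nonempty := by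
    obtain ⟨e₀, he₀⟩ := hσ.exists_lt
    rw [aSig_coe] at he₀
    have hfin : aR Ω σ e₀ ≠ ⊤ := he₀.ne_top
    set s : ℕ → Set (EuclideanSpace ℝ (Fin d)) :=
      fun n => {x | x ∈ Ω ∧ σ x < e₀ - n} with hs
    have hanti : Antitone s := by
      intro i j hij x hx
      refine ⟨hx.1, lt_of_lt_of_le hx.2 ?_⟩
      have : (i : ℝ) ≤ j := Nat.cast_le.2 hij
      linarith
    have hmeas : ∀ n, NullMeasurableSet (s n) (volume) := by
      intro n
      have : s n = Ω ∩ σ ⁻¹' Iio (e₀ - n) := rfl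
      rw [this]
      exact (hσ.measurableSet_Ω.inter (hσ.measurable_σ measurableSet_Iio)).nullMeasurableSet
    have hempty : ⋂ n, s n = ∅ := by
      ext x
      simp only [mem_iInter, mem_empty_iff_false, iff_false, not_forall]
      by_cases hxΩ : x ∈ Ω
      · obtain ⟨n, hn⟩ := exists_nat_gt (e₀ - σ x)
        exact ⟨n, fun hx => absurd hx.2 (by push_neg; linarith)⟩
      · exact ⟨0, fun hx => hxΩ hx.1⟩
    have hiInf := hanti.measure_iInter hmeas ⟨0, by
      refine ne_top_of_le_ne_top hfin (measure_mono ?_)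
      intro x hx
      exact ⟨hx.1, by simpa using hx.2.trans_le (by norm_num)⟩⟩
    rw [hempty, measure_empty] at hiInf
    have : ⨅ n, volume (s n) < m := by rw [← hiInf]; exact hm0
    obtain ⟨n, hn⟩ := iInf_lt_iff.1 this
    exact ⟨e₀ - n, hn⟩
  -- T is bounded above
  have hTbdd : BddAbove T := by
    set u : ℕ → Set (EuclideanSpace ℝ (Fin d)) :=
      fun n => {x | x ∈ Ω ∧ σ x < n} with hu
    have hmono : Monotone u := by
      intro i j hij x hx
      exact ⟨hx.1, lt_of_lt_of_le hx.2 (Nat.cast_le.2 hij)⟩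
    have hUnion : ⋃ n, u n = Ω := by
      ext x
      simp only [mem_iUnion]
      constructor
      · rintro ⟨n, hn⟩; exact hn.1
      · intro hx
        obtain ⟨n, hn⟩ := exists_nat_gt (σ x)
        exact ⟨n, hx, hn⟩
    have hsup := hmono.measure_iUnion (μ := volume)
    rw [hUnion] at hsup
    have : m < ⨆ n, volume (u n) := by rw [← hsup]; exact hμ
    obtain ⟨n₀, hn₀⟩ := lt_iSup_iff.1 this
    refine ⟨n₀, fun e heT => ?_⟩
    by_contra hcon
    push_neg at hcon
    exact absurd (aR_mono Ω σ hcon.le) (not_le.2 (lt_trans heT hn₀))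
  set c := sSup T with hc
  -- σ ≤ c on Aset
  have hub : ∀ x ∈ Aset Ω σ μ, σ x ≤ c := by
    intro x hx
    rw [mem_Aset_iff] at hx
    exact le_csSup hTbdd hx.2
  -- σ ≥ c outside Aset
  have hlb : ∀ x ∈ Ω, x ∉ Aset Ω σ μ → c ≤ σ x := by
    intro x hxΩ hx
    by_contra hcon
    push_neg at hcon
    obtain ⟨e, heT, he⟩ := exists_lt_of_lt_csSup hTne hcon
    have : aR Ω σ (σ x) < m := lt_of_le_of_lt (aR_mono Ω σ he.le) heT
    exact hx ((mem_Aset_iff Ω σ μ x).2 ⟨hxΩ, this⟩)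
  -- a(c) ≤ m
  have haRc : aR Ω σ c ≤ m := by
    set s : ℕ → Set (EuclideanSpace ℝ (Fin d)) :=
      fun n => {x | x ∈ Ω ∧ σ x < c - 1 / (n + 1)} with hs
    have hmono : Monotone s := by
      intro i j hij x hx
      refine ⟨hx.1, lt_of_lt_of_le hx.2 ?_⟩
      have h1 : (1:ℝ) / (j + 1) ≤ 1 / (i + 1) := by
        apply one_div_le_one_div_of_le
        · positivity
        · have : (i : ℝ) ≤ j := Nat.cast_le.2 hij
          linarith
      linarith
    have hUnion : ⋃ n, s n = {x | x ∈ Ω ∧ σ x < c} := by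
      ext x
      simp only [mem_iUnion, mem_setOf_eq]
      constructor
      · rintro ⟨n, hn⟩
        refine ⟨hn.1, lt_of_lt_of_le hn.2 ?_⟩
        have : (0:ℝ) < 1 / (n + 1) := by positivity
        linarith
      · rintro ⟨hxΩ, hxc⟩
        obtain ⟨n, hn⟩ := exists_nat_one_div_lt (sub_pos.2 hxc)
        exact ⟨n, hxΩ, by push_cast at hn ⊢; linarith⟩
    have hsup := hmono.measure_iUnion (μ := volume)
    rw [hUnion] at hsup
    have hle : ∀ n : ℕ, volume (s n) ≤ m := by
      intro n
      have hlt : c - 1 / (n + 1) < c := by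
        have : (0:ℝ) < 1 / (n + 1) := by positivity
        linarith
      obtain ⟨e, heT, he⟩ := exists_lt_of_lt_csSup hTne hlt
      exact le_trans (aR_mono Ω σ he.le) heT.le
    calc aR Ω σ c = ⨆ n, volume (s n) := hsup
      _ ≤ m := iSup_le hle
  have haRcΩ : aR Ω σ c < volume Ω := lt_of_le_of_lt haRc hμ
  -- c < eMax
  have hclt : (c : EReal) < eMax Ω σ := by
    have hmem : (c : EReal) ∈ {t : EReal | aSig Ω σ t < volume Ω} := by
      rw [mem_setOf_eq, aSig_coe]
      exact haRcΩ
    exact lt_of_le_of_ne (le_sSup hmem) (Ne.symm (eMax_ne_coe Ω σ hσ c haRcΩ))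
  have hlevel : volume {x | x ∈ Ω ∧ σ x = c} = 0 := hσ.levelSets c hclt
  -- meas {σ ≤ c} ≥ m
  have hge : m ≤ volume {x | x ∈ Ω ∧ σ x ≤ c} := by
    by_cases hA : ∃ e₁ : ℝ, c < e₁ ∧ aR Ω σ e₁ ≠ ⊤
    · obtain ⟨e₁, he₁, hfin⟩ := hA
      set s : ℕ → Set (EuclideanSpace ℝ (Fin d)) :=
        fun n => {x | x ∈ Ω ∧ σ x < c + (e₁ - c) / (n + 1)} with hs
      have hpos : (0:ℝ) < e₁ - c := sub_pos.2 he₁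
      have hanti : Antitone s := by
        intro i j hij x hx
        refine ⟨hx.1, lt_of_lt_of_le hx.2 ?_⟩
        have h1 : (e₁ - c) / (j + 1) ≤ (e₁ - c) / (i + 1) := by
          apply div_le_div_of_nonneg_left hpos.le (by positivity)
          have : (i : ℝ) ≤ j := Nat.cast_le.2 hij
          linarith
        linarith
      have hmeas : ∀ n, NullMeasurableSet (s n) (volume) := by
        intro n
        have : s n = Ω ∩ σ ⁻¹' Iio (c + (e₁ - c) / (n + 1)) := rfl
        rw [this]
        exact (hσ.measurableSet_Ω.inter (hσ.measurable_σ measurableSet_Iio)).nullMeasurableSet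
      have hInter : ⋂ n, s n = {x | x ∈ Ω ∧ σ x ≤ c} := by
        ext x
        simp only [mem_iInter, mem_setOf_eq]
        constructor
        · intro h
          refine ⟨(h 0).1, ?_⟩
          by_contra hcon
          push_neg at hcon
          obtain ⟨n, hn⟩ := exists_nat_one_div_lt (div_pos (sub_pos.2 hcon) hpos)
          have h2 := (h n).2
          rw [div_lt_div_iff₀ (by positivity) hpos] at hn
          have : (e₁ - c) / (n + 1) < σ x - c := by
            rw [div_lt_iff₀ (by positivity : (0:ℝ) < (n:ℝ) + 1)]
            push_cast at hn ⊢
            linarith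
          linarith
        · intro h n
          refine ⟨h.1, lt_of_le_of_lt h.2 ?_⟩
          have : (0:ℝ) < (e₁ - c) / (n + 1) := by positivity
          linarith
      have hfin0 : volume (s 0) ≠ ⊤ := by
        refine ne_top_of_le_ne_top hfin (measure_mono ?_)
        intro x hx
        refine ⟨hx.1, lt_of_lt_of_le hx.2 ?_⟩
        norm_num
      have hiInf := hanti.measure_iInter hmeas ⟨0, hfin0⟩
      rw [hInter] at hiInf
      rw [hiInf]
      refine le_iInf fun n => ?_
      have hgt : c < c + (e₁ - c) / (n + 1) := by
        have : (0:ℝ) < (e₁ - c) / (n + 1) := by positivity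
        linarith
      by_contra hcon
      push_neg at hcon
      have : c + (e₁ - c) / (n + 1) ∈ T := hcon
      exact absurd (le_csSup hTbdd this) (not_le.2 hgt)
    · exfalso
      push_neg at hA
      have hvolΩ : volume Ω = ⊤ := by
        have h1 : aR Ω σ (c + 1) = ⊤ := hA (c + 1) (by linarith)
        have := aR_mono Ω σ (le_refl (c + 1))
        have hle : aR Ω σ (c + 1) ≤ volume Ω := measure_mono fun x hx => hx.1
        rw [h1] at hle
        exact top_le_iff.1 hle
      have hle : eMax Ω σ ≤ (c : EReal) := by
        refine sSup_le fun t ht => ?_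
        rw [mem_setOf_eq, hvolΩ] at ht
        by_contra hcon
        push_neg at hcon
        induction t using EReal.rec with
        | bot => exact absurd bot_le (not_le.2 hcon)
        | coe t =>
          rw [EReal.coe_lt_coe_iff] at hcon
          rw [aSig_coe, hA t hcon] at ht
          exact absurd ht (lt_irrefl _)
        | top =>
          have : aSig Ω σ ⊤ = volume Ω := by
            rw [aSig]
            congr 1
            ext x
            simp [EReal.coe_lt_top]
          rw [this, hvolΩ] at ht
          exact absurd ht (lt_irrefl _)
      have hgec : (c : EReal) ≤ eMax Ω σ := by
        refine le_sSup ?_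
        rw [mem_setOf_eq, aSig_coe, hvolΩ]
        exact lt_of_le_of_lt haRc (lt_of_lt_of_le hμ hvolΩ.le)
      exact eMax_ne_coe Ω σ hσ c haRcΩ (le_antisymm hle hgec)
  -- sandwich: volume (Aset μ) = m
  have hsub1 : {x | x ∈ Ω ∧ σ x < c} ⊆ Aset Ω σ μ := by
    intro x hx
    obtain ⟨e, heT, he⟩ := exists_lt_of_lt_csSup hTne hx.2
    exact (mem_Aset_iff Ω σ μ x).2 ⟨hx.1, lt_of_le_of_lt (aR_mono Ω σ he.le) heT⟩
  have hsub2 : Aset Ω σ μ ⊆ {x | x ∈ Ω ∧ σ x ≤ c} := fun x hx => ⟨hx.1, hub x hx⟩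
  have hsplit : volume {x | x ∈ Ω ∧ σ x ≤ c} ≤ aR Ω σ c := by
    have : {x | x ∈ Ω ∧ σ x ≤ c} ⊆ {x | x ∈ Ω ∧ σ x < c} ∪ {x | x ∈ Ω ∧ σ x = c} := by
      intro x hx
      rcases lt_or_eq_of_le hx.2 with h | h
      · exact Or.inl ⟨hx.1, h⟩
      · exact Or.inr ⟨hx.1, h⟩
    calc volume {x | x ∈ Ω ∧ σ x ≤ c}
        ≤ volume ({x | x ∈ Ω ∧ σ x < c} ∪ {x | x ∈ Ω ∧ σ x = c}) := measure_mono this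
      _ ≤ volume {x | x ∈ Ω ∧ σ x < c} + volume {x | x ∈ Ω ∧ σ x = c} := measure_union_le _ _
      _ = aR Ω σ c := by rw [hlevel, add_zero]; rfl
  have heq1 : volume (Aset Ω σ μ) = m := by
    have h1 : m ≤ volume (Aset Ω σ μ) := by
      calc m ≤ volume {x | x ∈ Ω ∧ σ x ≤ c} := hge
        _ ≤ aR Ω σ c := hsplit
        _ ≤ volume (Aset Ω σ μ) := measure_mono hsub1
    have h2 : volume (Aset Ω σ μ) ≤ m := by
      calc volume (Aset Ω σ μ) ≤ volume {x | x ∈ Ω ∧ σ x ≤ c} := measure_mono hsub2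
        _ ≤ aR Ω σ c := hsplit
        _ ≤ m := haRc
    exact le_antisymm h2 h1
  exact ⟨c, heq1, hub, hlb⟩

/-- Measure of the sublevel set, including the degenerate case `μ = 0`. -/
lemma vol_Aset (hσ : SigAdmissible Ω σ) {μ : ℝ} (hμ0 : 0 ≤ μ)
    (hμ : ENNReal.ofReal μ < volume Ω) :
    volume (Aset Ω σ μ) = ENNReal.ofReal μ := by
  rcases eq_or_lt_of_le hμ0 with h | h
  · have : Aset Ω σ μ = ∅ := by
      ext x
      simp only [Aset, mem_setOf_eq, mem_empty_iff_false, iff_false]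
      rintro ⟨-, hx⟩
      rw [← h, ENNReal.ofReal_zero] at hx
      exact (ENNReal.not_lt_zero hx)
    rw [this, measure_empty, ← h, ENNReal.ofReal_zero]
  · obtain ⟨c, hc, -, -⟩ := key Ω σ hσ h hμ
    exact hc

end BSigAux

end AuxProof

/-- (Theorem 1 i)): if `σ` is admissible and `B_σ(μ)` is finite for all
`μ ∈ [0, meas Ω)`, then `B_σ` is convex on `[0, meas Ω)`. -/
theorem BSig_convexOn {d : ℕ} (Ω : Set (EuclideanSpace ℝ (Fin d)))
    (σ : EuclideanSpace ℝ (Fin d) → ℝ) (hσ : SigAdmissible Ω σ) (hB : BSigFinite Ω σ) :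
    ConvexOn ℝ {μ : ℝ | 0 ≤ μ ∧ ENNReal.ofReal μ < volume Ω} (BSig Ω σ) := by
  classical
  have hSconv : Convex ℝ {μ : ℝ | 0 ≤ μ ∧ ENNReal.ofReal μ < volume Ω} := by
    rw [convex_iff_ordConnected]
    constructor
    intro a ha b hb c hc
    exact ⟨le_trans ha.1 hc.1, lt_of_le_of_lt (ENNReal.ofReal_le_ofReal hc.2) hb.2⟩
  refine convexOn_of_slope_mono_adjacent hSconv ?_
  intro x y z hx hz hxy hyz
  have hy : y ∈ {μ : ℝ | 0 ≤ μ ∧ ENNReal.ofReal μ < volume Ω} :=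
    ⟨hx.1.trans hxy.le, lt_of_le_of_lt (ENNReal.ofReal_le_ofReal hyz.le) hz.2⟩
  have hy0 : 0 < y := lt_of_le_of_lt hx.1 hxy
  obtain ⟨c, hvoly, hub, hlb⟩ := BSigAux.key Ω σ hσ hy0 hy.2
  have hvolx : volume (BSigAux.Aset Ω σ x) = ENNReal.ofReal x :=
    BSigAux.vol_Aset Ω σ hσ hx.1 hx.2
  have hvolz : volume (BSigAux.Aset Ω σ z) = ENNReal.ofReal z :=
    BSigAux.vol_Aset Ω σ hσ hz.1 hz.2
  have hmx := BSigAux.measurableSet_Aset Ω σ hσ x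
  have hmy := BSigAux.measurableSet_Aset Ω σ hσ y
  have hmz := BSigAux.measurableSet_Aset Ω σ hσ z
  have hxy' : BSigAux.Aset Ω σ x ⊆ BSigAux.Aset Ω σ y := BSigAux.Aset_mono Ω σ hxy.le
  have hyz' : BSigAux.Aset Ω σ y ⊆ BSigAux.Aset Ω σ z := BSigAux.Aset_mono Ω σ hyz.le
  have hIy : IntegrableOn σ (BSigAux.Aset Ω σ y) := hB y hy.1 hy.2
  have hIz : IntegrableOn σ (BSigAux.Aset Ω σ z) := hB z hz.1 hz.2
  -- measures of the differences
  have hdiff1 : volume (BSigAux.Aset Ω σ y \ BSigAux.Aset Ω σ x) = ENNReal.ofReal (y - x) := by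
    rw [measure_diff hxy' hmx.nullMeasurableSet (by rw [hvolx]; exact ENNReal.ofReal_ne_top),
      hvolx, hvoly, ← ENNReal.ofReal_sub _ hx.1]
  have hdiff2 : volume (BSigAux.Aset Ω σ z \ BSigAux.Aset Ω σ y) = ENNReal.ofReal (z - y) := by
    rw [measure_diff hyz' hmy.nullMeasurableSet (by rw [hvoly]; exact ENNReal.ofReal_ne_top),
      hvoly, hvolz, ← ENNReal.ofReal_sub _ hy.1]
  -- integral identities
  have hI1 : ∫ w in BSigAux.Aset Ω σ y \ BSigAux.Aset Ω σ x, σ w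
      = BSig Ω σ y - BSig Ω σ x := by
    rw [BSigAux.BSig_eq, BSigAux.BSig_eq]
    exact integral_diff hmx hIy hxy'
  have hI2 : ∫ w in BSigAux.Aset Ω σ z \ BSigAux.Aset Ω σ y, σ w
      = BSig Ω σ z - BSig Ω σ y := by
    rw [BSigAux.BSig_eq, BSigAux.BSig_eq]
    exact integral_diff hmy hIz hyz'
  -- upper bound on the first increment
  have hBd1 : BSig Ω σ y - BSig Ω σ x ≤ c * (y - x) := by
    rw [← hI1]
    have h1 : ∫ w in BSigAux.Aset Ω σ y \ BSigAux.Aset Ω σ x, σ w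
        ≤ ∫ _ in BSigAux.Aset Ω σ y \ BSigAux.Aset Ω σ x, c := by
      refine setIntegral_mono_on (hIy.mono_set diff_subset) ?_ (hmy.diff hmx) ?_
      · refine integrableOn_const ?_
        rw [hdiff1]; exact ENNReal.ofReal_ne_top
      · intro w hw
        exact hub w (diff_subset hw)
    rw [setIntegral_const, measureReal_def, hdiff1, smul_eq_mul,
      ENNReal.toReal_ofReal (by linarith)] at h1
    linarith [h1]
  -- lower bound on the second increment
  have hBd2 : c * (z - y) ≤ BSig Ω σ z - BSig Ω σ y := by
    rw [← hI2]
    have h1 : ∫ _ in BSigAux.Aset Ω σ z \ BSigAux.Aset Ω σ y, c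
        ≤ ∫ w in BSigAux.Aset Ω σ z \ BSigAux.Aset Ω σ y, σ w := by
      refine setIntegral_mono_on ?_ (hIz.mono_set diff_subset) (hmz.diff hmy) ?_
      · refine integrableOn_const ?_
        rw [hdiff2]; exact ENNReal.ofReal_ne_top
      · intro w hw
        exact hlb w hw.1.1 hw.2
    rw [setIntegral_const, measureReal_def, hdiff2, smul_eq_mul,
      ENNReal.toReal_ofReal (by linarith)] at h1
    linarith [h1]
  -- conclude the slope inequality
  have hxy0 : 0 < y - x := by linarith
  have hyz0 : 0 < z - y := by linarith
  rw [div_le_div_iff₀ hxy0 hyz0]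
  nlinarith [mul_le_mul_of_nonneg_right hBd1 hyz0.le,
    mul_le_mul_of_nonneg_right hBd2 hxy0.le]
end

section
/- Generalized Hardy-Littlewood inequality: Let σ be a measurable function on a domain Ω ⊂ ℝ^d (d ≥ 1) satisfying the admissibility assumptions for σ-rearrangements, with B_σ(μ) finite for all μ ∈ [0, meas(Ω)). Then for every nonnegative f ∈ L¹(Ω): ∫_Ω σ(x)(f(x) − f^{*σ}(x)) dx ≥ 0. -/
open MeasureTheory Set Filter Metric
open scoped ENNReal NNReal

section HLAux

open MeasureTheory Set Filter

variable {d : ℕ} {Ω : Set (EuclideanSpace ℝ (Fin d))} {σ : EuclideanSpace ℝ (Fin d) → ℝ}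

namespace HLAux

lemma aSig_mono : Monotone (aSig Ω σ) := fun _ _ h =>
  measure_mono fun _ hx => ⟨hx.1, lt_of_lt_of_le hx.2 h⟩

lemma aSig_le (e : EReal) : aSig Ω σ e ≤ volume Ω :=
  measure_mono fun _ hx => hx.1

lemma aSig_top : aSig Ω σ ⊤ = volume Ω := by
  unfold aSig
  congr 1
  ext x
  simp

lemma measSet (hσ : SigAdmissible Ω σ) (e : EReal) :
    MeasurableSet {x | x ∈ Ω ∧ (σ x : EReal) < e} :=
  hσ.measurableSet_Ω.inter <|
    (measurable_coe_real_ereal.comp hσ.measurable_σ) measurableSet_Iio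

lemma m_pos (hσ : SigAdmissible Ω σ) : 0 < volume Ω := by
  obtain ⟨e, he⟩ := hσ.exists_lt
  exact lt_of_le_of_lt zero_le he

/-- Left continuity of `aSig` via rationals. -/
lemma aSig_eq_iSup (c : EReal) :
    aSig Ω σ c = ⨆ q : {q : ℚ // ((q : ℝ) : EReal) < c}, aSig Ω σ ((q.1 : ℝ) : EReal) := by
  have hset : {x | x ∈ Ω ∧ (σ x : EReal) < c}
      = ⋃ q : {q : ℚ // ((q : ℝ) : EReal) < c}, {x | x ∈ Ω ∧ (σ x : EReal) < ((q.1 : ℝ) : EReal)} := by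
    ext x
    constructor
    · rintro ⟨hxΩ, hlt⟩
      obtain ⟨q, hq1, hq2⟩ := EReal.exists_rat_btwn_of_lt hlt
      exact mem_iUnion.2 ⟨⟨q, hq2⟩, hxΩ, hq1⟩
    · rintro hx
      obtain ⟨⟨q, hq⟩, hxΩ, hlt⟩ := mem_iUnion.1 hx
      exact ⟨hxΩ, lt_trans hlt hq⟩
  have hdir : Directed (· ⊆ ·)
      (fun q : {q : ℚ // ((q : ℝ) : EReal) < c} =>
        {x | x ∈ Ω ∧ (σ x : EReal) < ((q.1 : ℝ) : EReal)}) := by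
    intro q q'
    rcases le_total (q.1 : ℝ) (q'.1 : ℝ) with h | h
    · exact ⟨q', fun x hx => ⟨hx.1, lt_of_lt_of_le hx.2 (by exact_mod_cast h)⟩, fun x hx => hx⟩
    · exact ⟨q, fun x hx => hx, fun x hx => ⟨hx.1, lt_of_lt_of_le hx.2 (by exact_mod_cast h)⟩⟩
  unfold aSig
  rw [hset, hdir.measure_iUnion]

lemma bot_lt_eMax (hσ : SigAdmissible Ω σ) : (⊥ : EReal) < eMax Ω σ :=
  lt_of_le_of_lt bot_le hσ.eMin_lt_eMax

/-- From `c < eMax`, get a real `e > c` with `aSig e < volume Ω`. -/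
lemma exists_real_btwn_eMax (hσ : SigAdmissible Ω σ) {c : EReal} (hc : c < eMax Ω σ) :
    ∃ e : ℝ, c < (e : EReal) ∧ aSig Ω σ (e : EReal) < volume Ω := by
  obtain ⟨b, hbS, hcb⟩ := lt_sSup_iff.1 hc
  have hbne : b ≠ ⊤ := by
    rintro rfl
    simp only [mem_setOf_eq, aSig_top] at hbS
    exact lt_irrefl _ hbS
  have hbne' : b ≠ ⊥ := fun h => not_lt_bot (h ▸ hcb)
  lift b to ℝ using ⟨hbne, hbne'⟩
  exact ⟨b, hcb, hbS⟩

lemma neBot_comap (hσ : SigAdmissible Ω σ) :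
    (comap (fun e : ℝ => (e : EReal))
      (nhdsWithin (eMax Ω σ) (Iio (eMax Ω σ)))).NeBot := by
  rw [comap_neBot_iff]
  intro t ht
  rw [mem_nhdsWithin] at ht
  obtain ⟨u, hu_open, hmem, hsub⟩ := ht
  obtain ⟨l, hl, hsub2⟩ := exists_Ioc_subset_of_mem_nhds (hu_open.mem_nhds hmem)
    ⟨⊥, bot_lt_eMax hσ⟩
  obtain ⟨q, hq1, hq2⟩ := EReal.exists_rat_btwn_of_lt hl
  exact ⟨(q : ℝ), hsub ⟨hsub2 ⟨hq1, le_of_lt hq2⟩, hq2⟩⟩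

lemma exists_real_big (hσ : SigAdmissible Ω σ) {c : ℝ≥0∞} (hc : c < volume Ω) :
    ∃ e : ℝ, (e : EReal) < eMax Ω σ ∧ c < aSig Ω σ (e : EReal) := by
  haveI := neBot_comap hσ
  have h1 : ∀ᶠ e : ℝ in comap (fun e : ℝ => (e : EReal))
      (nhdsWithin (eMax Ω σ) (Iio (eMax Ω σ))), aSig Ω σ (e : EReal) ∈ Ioi c :=
    hσ.tendsto_eMax (Ioi_mem_nhds hc)
  have h2 : ∀ᶠ e : ℝ in comap (fun e : ℝ => (e : EReal))
      (nhdsWithin (eMax Ω σ) (Iio (eMax Ω σ))), (e : EReal) ∈ Iio (eMax Ω σ) :=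
    preimage_mem_comap self_mem_nhdsWithin
  obtain ⟨e, he1, he2⟩ := (h1.and h2).exists
  exact ⟨e, he2, he1⟩

lemma aSig_eMax (hσ : SigAdmissible Ω σ) : aSig Ω σ (eMax Ω σ) = volume Ω := by
  refine le_antisymm (aSig_le _) (le_of_forall_lt fun c hc => ?_)
  obtain ⟨e, he1, he2⟩ := exists_real_big hσ hc
  exact lt_of_lt_of_le he2 (aSig_mono he1.le)

lemma meas_closed_level (hσ : SigAdmissible Ω σ) {t : ℝ} (ht : (t : EReal) < eMax Ω σ) :
    volume {x | x ∈ Ω ∧ σ x ≤ t} = aSig Ω σ (t : EReal) := by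
  refine le_antisymm ?_
    (measure_mono fun x hx => ⟨hx.1, le_of_lt (EReal.coe_lt_coe_iff.1 hx.2)⟩)
  have hsub : {x | x ∈ Ω ∧ σ x ≤ t}
      ⊆ {x | x ∈ Ω ∧ (σ x : EReal) < (t : EReal)} ∪ {x | x ∈ Ω ∧ σ x = t} := by
    rintro x ⟨hxΩ, hle⟩
    rcases lt_or_eq_of_le hle with h | h
    · exact Or.inl ⟨hxΩ, EReal.coe_lt_coe_iff.2 h⟩
    · exact Or.inr ⟨hxΩ, h⟩
  calc volume {x | x ∈ Ω ∧ σ x ≤ t}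
      ≤ volume ({x | x ∈ Ω ∧ (σ x : EReal) < (t : EReal)} ∪ {x | x ∈ Ω ∧ σ x = t}) :=
        measure_mono hsub
    _ ≤ volume {x | x ∈ Ω ∧ (σ x : EReal) < (t : EReal)} + volume {x | x ∈ Ω ∧ σ x = t} :=
        measure_union_le _ _
    _ = aSig Ω σ (t : EReal) := by rw [hσ.levelSets t ht, add_zero]; rfl

/-- Right continuity of `aSig` below `eMax`, in targeted form. -/
lemma exists_right (hσ : SigAdmissible Ω σ) {t : ℝ} (ht : (t : EReal) < eMax Ω σ)
    {μ : ℝ≥0∞} (hμ : aSig Ω σ (t : EReal) < μ) :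
    ∃ r : ℝ, t < r ∧ aSig Ω σ (r : EReal) < μ := by
  obtain ⟨e, he1, he2⟩ := exists_real_btwn_eMax hσ ht
  have hte : t < e := EReal.coe_lt_coe_iff.1 he1
  set s : ℕ → Set (EuclideanSpace ℝ (Fin d)) :=
    fun n => {x | x ∈ Ω ∧ (σ x : EReal) < ((t + (e - t) / ((n : ℝ) + 1) : ℝ) : EReal)} with hs
  have hkey : ∀ m n : ℕ, m ≤ n →
      t + (e - t) / ((n : ℝ) + 1) ≤ t + (e - t) / ((m : ℝ) + 1) := by
    intro m n h
    have h1 : (0:ℝ) ≤ e - t := sub_nonneg.2 hte.le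
    have h2 : (0:ℝ) < (m : ℝ) + 1 := by positivity
    have h3 : ((m : ℝ) + 1) ≤ ((n : ℝ) + 1) := by
      have : (m : ℝ) ≤ (n : ℝ) := Nat.cast_le.2 h
      linarith
    have h4 : (e - t) / ((n:ℝ)+1) ≤ (e - t) / ((m:ℝ)+1) := by gcongr
    linarith
  have hanti : Antitone s := by
    intro m n hmn x hx
    exact ⟨hx.1, lt_of_lt_of_le hx.2 (EReal.coe_le_coe_iff.2 (hkey m n hmn))⟩
  have hiInt : ⋂ n, s n = {x | x ∈ Ω ∧ σ x ≤ t} := by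
    ext x
    simp only [mem_iInter, hs, mem_setOf_eq]
    constructor
    · intro h
      refine ⟨(h 0).1, ?_⟩
      by_contra hlt
      push_neg at hlt
      have hst : 0 < σ x - t := sub_pos.2 hlt
      obtain ⟨n, hn⟩ := exists_nat_gt ((e - t) / (σ x - t))
      have h2 : σ x < t + (e - t) / ((n : ℝ) + 1) := EReal.coe_lt_coe_iff.1 (h n).2
      have h3 : e - t < ((n : ℝ)) * (σ x - t) := (div_lt_iff₀ hst).1 hn
      have h4 : (e - t) / ((n : ℝ) + 1) < σ x - t := by
        rw [div_lt_iff₀ (by positivity)]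
        nlinarith
      linarith
    · rintro ⟨hxΩ, hle⟩ n
      refine ⟨hxΩ, EReal.coe_lt_coe_iff.2 ?_⟩
      have : (0:ℝ) < (e - t) / ((n : ℝ) + 1) := by
        apply div_pos (sub_pos.2 hte)
        positivity
      linarith
  have hfin : ∃ n, volume (s n) ≠ ∞ := by
    refine ⟨0, ?_⟩
    have : volume (s 0) ≤ aSig Ω σ (e : EReal) := by
      apply measure_mono
      intro x hx
      refine ⟨hx.1, lt_of_lt_of_le hx.2 (EReal.coe_le_coe_iff.2 ?_)⟩
      have : (e - t) / ((0 : ℝ) + 1) = e - t := by norm_num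
      simp only [Nat.cast_zero, this]
      linarith
    exact (lt_of_le_of_lt this (lt_of_lt_of_le he2 le_top)).ne
  have hmeas := Directed.measure_iInter (μ := volume) (s := s)
    (fun n => (measSet hσ _).nullMeasurableSet) hanti.directed_ge hfin
  rw [hiInt, meas_closed_level hσ ht] at hmeas
  have : ⨅ n, volume (s n) < μ := hmeas ▸ hμ
  obtain ⟨n, hn⟩ := iInf_lt_iff.1 this
  refine ⟨t + (e - t) / ((n : ℝ) + 1), ?_, hn⟩
  have : (0:ℝ) < (e - t) / ((n : ℝ) + 1) := by
    apply div_pos (sub_pos.2 hte); positivity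
  linarith

/-- `aSig e → 0` as `e → -∞`, targeted form. -/
lemma exists_small (hσ : SigAdmissible Ω σ) {μ : ℝ≥0∞} (hμ : 0 < μ) :
    ∃ e : ℝ, aSig Ω σ (e : EReal) < μ := by
  obtain ⟨e₀, he₀⟩ := hσ.exists_lt
  set s : ℕ → Set (EuclideanSpace ℝ (Fin d)) :=
    fun n => {x | x ∈ Ω ∧ (σ x : EReal) < ((e₀ - (n : ℝ) : ℝ) : EReal)} with hs
  have hanti : Antitone s := by
    intro m n hmn x hx
    refine ⟨hx.1, lt_of_lt_of_le hx.2 (EReal.coe_le_coe_iff.2 ?_)⟩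
    have : (m : ℝ) ≤ (n : ℝ) := Nat.cast_le.2 hmn
    linarith
  have hiInt : ⋂ n, s n = ∅ := by
    ext x
    simp only [mem_iInter, hs, mem_setOf_eq, mem_empty_iff_false, iff_false, not_forall]
    by_contra hcon
    push_neg at hcon
    obtain ⟨n, hn⟩ := exists_nat_gt (e₀ - σ x)
    have := EReal.coe_lt_coe_iff.1 (hcon n).2
    linarith
  have hfin : ∃ n, volume (s n) ≠ ∞ := by
    refine ⟨0, ?_⟩
    have hle : volume (s 0) ≤ aSig Ω σ (e₀ : EReal) := by
      apply measure_mono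
      intro x hx
      exact ⟨hx.1, lt_of_lt_of_le hx.2 (EReal.coe_le_coe_iff.2 (by norm_num))⟩
    exact (lt_of_le_of_lt hle (lt_of_lt_of_le he₀ le_top)).ne
  have hmeas := Directed.measure_iInter (μ := volume) (s := s)
    (fun n => (measSet hσ _).nullMeasurableSet) hanti.directed_ge hfin
  rw [hiInt, measure_empty] at hmeas
  have : ⨅ n, volume (s n) < μ := hmeas ▸ hμ
  obtain ⟨n, hn⟩ := iInf_lt_iff.1 this
  exact ⟨e₀ - (n : ℝ), hn⟩

/-- The set where `aSig (σ x) = 0` is null. -/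
lemma null_zero (hσ : SigAdmissible Ω σ) :
    volume {x | x ∈ Ω ∧ aSig Ω σ ((σ x : ℝ) : EReal) = 0} = 0 := by
  set t₀ : EReal := sSup {e : EReal | aSig Ω σ e = 0} with ht₀def
  have ht₀0 : aSig Ω σ t₀ = 0 := by
    rw [aSig_eq_iSup]
    refine le_antisymm (iSup_le ?_) zero_le
    rintro ⟨q, hq⟩
    obtain ⟨b, hbZ, hqb⟩ := lt_sSup_iff.1 hq
    exact (aSig_mono hqb.le).trans hbZ.le
  have ht₀m : t₀ < eMax Ω σ := by
    have hle : t₀ ≤ eMax Ω σ := by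
      apply sSup_le
      intro e he
      apply le_sSup
      show aSig Ω σ e < volume Ω
      rw [he]
      exact m_pos hσ
    rcases lt_or_eq_of_le hle with h | h
    · exact h
    · exfalso
      rw [h, aSig_eMax hσ] at ht₀0
      exact (m_pos hσ).ne' ht₀0
  have hsub : {x | x ∈ Ω ∧ aSig Ω σ ((σ x : ℝ) : EReal) = 0}
      ⊆ {x | x ∈ Ω ∧ (σ x : EReal) ≤ t₀} := fun x hx => ⟨hx.1, le_sSup hx.2⟩
  by_cases ht₀b : t₀ = ⊥
  · apply measure_mono_null hsub
    have : {x | x ∈ Ω ∧ (σ x : EReal) ≤ t₀} = ∅ := by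
      ext x
      simp only [mem_setOf_eq, mem_empty_iff_false, iff_false, not_and]
      intro _
      rw [ht₀b]
      exact fun h => (EReal.bot_lt_coe (σ x)).not_ge h
    rw [this, measure_empty]
  · have ht₀t : t₀ ≠ ⊤ := (lt_of_lt_of_le ht₀m le_top).ne
    obtain ⟨r, hr⟩ : ∃ r : ℝ, t₀ = (r : EReal) := ⟨t₀.toReal, (EReal.coe_toReal ht₀t ht₀b).symm⟩
    apply measure_mono_null hsub
    have hseteq : {x | x ∈ Ω ∧ (σ x : EReal) ≤ t₀} = {x | x ∈ Ω ∧ σ x ≤ r} := by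
      ext x
      rw [hr]
      simp [EReal.coe_le_coe_iff]
    rw [hseteq, meas_closed_level hσ (hr ▸ ht₀m), ← hr, ht₀0]

/-- The supremum of `aSig` over rationals in the sublevel `{aSig < μ}` equals `μ`. -/
lemma sup_eq (hσ : SigAdmissible Ω σ) {μ : ℝ≥0∞} (hμ0 : 0 < μ) (hμm : μ ≤ volume Ω) :
    ⨆ q : {q : ℚ // aSig Ω σ ((q : ℝ) : EReal) < μ}, aSig Ω σ ((q.1 : ℝ) : EReal) = μ := by
  have hne : Nonempty {q : ℚ // aSig Ω σ ((q : ℝ) : EReal) < μ} := by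
    obtain ⟨e, he⟩ := exists_small hσ hμ0
    obtain ⟨q, hq⟩ := exists_rat_lt e
    exact ⟨⟨q, lt_of_le_of_lt (aSig_mono (EReal.coe_le_coe_iff.2 hq.le)) he⟩⟩
  refine le_antisymm (iSup_le fun q => q.2.le) ?_
  by_contra hcon
  push_neg at hcon
  set ν := ⨆ q : {q : ℚ // aSig Ω σ ((q : ℝ) : EReal) < μ}, aSig Ω σ ((q.1 : ℝ) : EReal)
    with hν
  set c : EReal :=
    sSup ((fun q : ℚ => ((q : ℝ) : EReal)) '' {q : ℚ | aSig Ω σ ((q : ℝ) : EReal) < μ})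
    with hc
  have hsmall : ∀ {b : EReal}, b < c → aSig Ω σ b ≤ ν := by
    intro b hb
    obtain ⟨b', hb'S, hbb'⟩ := lt_sSup_iff.1 hb
    obtain ⟨q', hq'S, rfl⟩ := hb'S
    exact (aSig_mono hbb'.le).trans (le_iSup
      (fun q : {q : ℚ // aSig Ω σ ((q : ℝ) : EReal) < μ} => aSig Ω σ ((q.1 : ℝ) : EReal))
      ⟨q', hq'S⟩)
  rcases lt_or_ge c (eMax Ω σ) with hcm | hcm
  · have hct : c ≠ ⊤ := (lt_of_lt_of_le hcm le_top).ne
    have hcb : c ≠ ⊥ := by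
      obtain ⟨⟨q₀, hq₀⟩⟩ := hne
      have : ((q₀ : ℝ) : EReal) ≤ c := le_sSup ⟨q₀, hq₀, rfl⟩
      exact fun h => (EReal.bot_lt_coe (q₀ : ℝ)).not_ge (h ▸ this)
    obtain ⟨r, hr⟩ : ∃ r : ℝ, c = (r : EReal) := ⟨c.toReal, (EReal.coe_toReal hct hcb).symm⟩
    have hAr : aSig Ω σ (r : EReal) < μ := by
      have : aSig Ω σ (r : EReal) ≤ ν := by
        rw [aSig_eq_iSup]
        refine iSup_le ?_
        rintro ⟨q, hq⟩
        exact hsmall (by rw [hr]; exact hq)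
      exact lt_of_le_of_lt this hcon
    obtain ⟨r', hrr', hAr'⟩ := exists_right hσ (hr ▸ hcm) hAr
    obtain ⟨q, hq1, hq2⟩ := exists_rat_btwn hrr'
    have hqS : aSig Ω σ ((q : ℝ) : EReal) < μ :=
      lt_of_le_of_lt (aSig_mono (EReal.coe_le_coe_iff.2 hq2.le)) hAr'
    have : ((q : ℝ) : EReal) ≤ c := le_sSup ⟨q, hqS, rfl⟩
    rw [hr] at this
    exact hq1.not_ge (EReal.coe_le_coe_iff.1 this)
  · have : volume Ω ≤ ν := by
      rw [← aSig_eMax hσ, aSig_eq_iSup]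
      refine iSup_le ?_
      rintro ⟨q, hq⟩
      exact hsmall (lt_of_lt_of_le hq hcm)
    exact absurd (lt_of_le_of_lt (hμm.trans this) hcon) (lt_irrefl _)

/-- **Uniform distribution of `aSig (σ ·)`**. -/
lemma lemA (hσ : SigAdmissible Ω σ) {μ : ℝ≥0∞} (hμ0 : 0 < μ) (hμm : μ ≤ volume Ω) :
    volume {x | x ∈ Ω ∧ aSig Ω σ ((σ x : ℝ) : EReal) < μ} = μ := by
  have hset : {x | x ∈ Ω ∧ aSig Ω σ ((σ x : ℝ) : EReal) < μ}
      = ⋃ q : {q : ℚ // aSig Ω σ ((q : ℝ) : EReal) < μ},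
          {x | x ∈ Ω ∧ (σ x : EReal) < ((q.1 : ℝ) : EReal)} := by
    ext x
    constructor
    · rintro ⟨hxΩ, hxμ⟩
      have hxm : (σ x : EReal) < eMax Ω σ := by
        by_contra hge
        push_neg at hge
        have : volume Ω ≤ aSig Ω σ ((σ x : ℝ) : EReal) := by
          rw [← aSig_eMax hσ]
          exact aSig_mono hge
        exact absurd (lt_of_le_of_lt (hμm.trans this) hxμ) (lt_irrefl _)
      obtain ⟨r, hr1, hr2⟩ := exists_right hσ hxm hxμ
      obtain ⟨q, hq1, hq2⟩ := exists_rat_btwn hr1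
      refine mem_iUnion.2 ⟨⟨q, lt_of_le_of_lt (aSig_mono (EReal.coe_le_coe_iff.2 hq2.le)) hr2⟩,
        hxΩ, EReal.coe_lt_coe_iff.2 hq1⟩
    · intro hx
      obtain ⟨⟨q, hq⟩, hxΩ, hlt⟩ := mem_iUnion.1 hx
      exact ⟨hxΩ, lt_of_le_of_lt (aSig_mono hlt.le) hq⟩
  have hdir : Directed (· ⊆ ·)
      (fun q : {q : ℚ // aSig Ω σ ((q : ℝ) : EReal) < μ} =>
        {x | x ∈ Ω ∧ (σ x : EReal) < ((q.1 : ℝ) : EReal)}) := by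
    intro q q'
    rcases le_total (q.1 : ℝ) (q'.1 : ℝ) with h | h
    · exact ⟨q', fun x hx => ⟨hx.1, lt_of_lt_of_le hx.2 (by exact_mod_cast h)⟩, fun x hx => hx⟩
    · exact ⟨q, fun x hx => hx, fun x hx => ⟨hx.1, lt_of_lt_of_le hx.2 (by exact_mod_cast h)⟩⟩
  rw [hset, hdir.measure_iUnion]
  exact sup_eq hσ hμ0 hμm

/-- Restricted version of Lemma A. -/
lemma lemA' (hσ : SigAdmissible Ω σ) {e : ℝ} (he : (e : EReal) < eMax Ω σ)
    {μ : ℝ≥0∞} (hμ0 : 0 < μ) :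
    volume {x | x ∈ Ω ∧ (σ x : EReal) < (e : EReal) ∧ aSig Ω σ ((σ x : ℝ) : EReal) < μ}
      = min (aSig Ω σ (e : EReal)) μ := by
  rcases lt_or_ge (aSig Ω σ (e : EReal)) μ with h | h
  · have hset : {x | x ∈ Ω ∧ (σ x : EReal) < (e : EReal) ∧ aSig Ω σ ((σ x : ℝ) : EReal) < μ}
        = {x | x ∈ Ω ∧ (σ x : EReal) < (e : EReal)} := by
      ext x
      refine ⟨fun hx => ⟨hx.1, hx.2.1⟩, fun hx => ⟨hx.1, hx.2, ?_⟩⟩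
      exact lt_of_le_of_lt (aSig_mono hx.2.le) h
    rw [hset, min_eq_left h.le]
    rfl
  · have hμm : μ ≤ volume Ω := h.trans (aSig_le _)
    have hset : {x | x ∈ Ω ∧ (σ x : EReal) < (e : EReal) ∧ aSig Ω σ ((σ x : ℝ) : EReal) < μ}
        = {x | x ∈ Ω ∧ aSig Ω σ ((σ x : ℝ) : EReal) < μ} := by
      ext x
      refine ⟨fun hx => ⟨hx.1, hx.2.2⟩, fun hx => ⟨hx.1, ?_, hx.2⟩⟩
      by_contra hge
      push_neg at hge
      exact absurd (lt_of_le_of_lt (h.trans (aSig_mono hge)) hx.2) (lt_irrefl _)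
    rw [hset, min_eq_right h, lemA hσ hμ0 hμm]

variable {q : EuclideanSpace ℝ (Fin d) → ℝ}

lemma distFun_anti : Antitone (distFun Ω q) := fun t t' h =>
  measure_mono fun _ hx => ⟨hx.1, lt_of_le_of_lt h hx.2⟩

lemma distFun_le (t : ℝ) : distFun Ω q t ≤ volume Ω := measure_mono fun _ hx => hx.1

lemma pseudoInv_nonneg (s : ℝ≥0∞) : 0 ≤ pseudoInv Ω q s :=
  Real.sInf_nonneg fun _ ht => ht.1

lemma pseudoInv_le {t : ℝ} {s : ℝ≥0∞} (ht : 0 ≤ t) (h : distFun Ω q t ≤ s) :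
    pseudoInv Ω q s ≤ t :=
  csInf_le ⟨0, fun _ ht' => ht'.1⟩ ⟨ht, h⟩

lemma distFun_meas (hΩ : MeasurableSet Ω) (hq : Measurable q) (t : ℝ) :
    MeasurableSet {x | x ∈ Ω ∧ t < q x} :=
  hΩ.inter (hq measurableSet_Ioi)

lemma distFun_right_cont (t : ℝ) :
    distFun Ω q t = ⨆ n : ℕ, distFun Ω q (t + 1 / ((n : ℝ) + 1)) := by
  have hset : {x | x ∈ Ω ∧ t < q x}
      = ⋃ n : ℕ, {x | x ∈ Ω ∧ t + 1 / ((n : ℝ) + 1) < q x} := by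
    ext x
    simp only [mem_setOf_eq, mem_iUnion]
    constructor
    · rintro ⟨hxΩ, hlt⟩
      obtain ⟨n, hn⟩ := exists_nat_gt (1 / (q x - t))
      refine ⟨n, hxΩ, ?_⟩
      have hqt : 0 < q x - t := sub_pos.2 hlt
      have h1 : 1 / (q x - t) < (n : ℝ) + 1 := hn.trans_le (by linarith)
      have h2 : 1 / ((n : ℝ) + 1) < q x - t := by
        rw [div_lt_iff₀ (by positivity)]
        rw [div_lt_iff₀ hqt] at h1
        nlinarith
      linarith
    · rintro ⟨n, hxΩ, hlt⟩
      have : (0:ℝ) < 1 / ((n : ℝ) + 1) := by positivity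
      exact ⟨hxΩ, by linarith⟩
  have hmono : Monotone (fun n : ℕ => {x | x ∈ Ω ∧ t + 1 / ((n : ℝ) + 1) < q x}) := by
    intro m n hmn x hx
    refine ⟨hx.1, lt_of_le_of_lt ?_ hx.2⟩
    have h3 : ((m : ℝ) + 1) ≤ ((n : ℝ) + 1) := by
      have : (m : ℝ) ≤ (n : ℝ) := Nat.cast_le.2 hmn
      linarith
    have : 1 / ((n : ℝ) + 1) ≤ 1 / ((m : ℝ) + 1) := one_div_le_one_div_of_le (by positivity) h3
    linarith
  unfold distFun
  rw [hset, hmono.measure_iUnion]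

lemma distFun_lt_top (hΩ : MeasurableSet Ω) (hq_int : IntegrableOn q Ω) {t : ℝ}
    (ht : 0 < t) : distFun Ω q t < ∞ := by
  have key : ENNReal.ofReal t * (volume.restrict Ω) {x | ENNReal.ofReal t ≤ ENNReal.ofReal (q x)}
      ≤ ∫⁻ x, ENNReal.ofReal (q x) ∂(volume.restrict Ω) :=
    mul_meas_ge_le_lintegral₀ (ENNReal.measurable_ofReal.comp_aemeasurable
      hq_int.aemeasurable) _
  have hfin : ∫⁻ x, ENNReal.ofReal (q x) ∂(volume.restrict Ω) < ∞ := by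
    refine lt_of_le_of_lt (lintegral_mono fun x => ?_) hq_int.2
    exact Real.ofReal_le_enorm (q x)
  have hsub : distFun Ω q t
      ≤ (volume.restrict Ω) {x | ENNReal.ofReal t ≤ ENNReal.ofReal (q x)} := by
    rw [Measure.restrict_apply' hΩ]
    refine measure_mono fun x hx => ⟨?_, hx.1⟩
    exact ENNReal.ofReal_le_ofReal hx.2.le
  by_contra hcon
  push_neg at hcon
  rw [top_le_iff] at hcon
  rw [hcon, top_le_iff] at hsub
  rw [hsub, ENNReal.mul_top (by simpa using ht.le.lt_of_ne' (by simpa using ht.ne'))] at key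
  · exact absurd (lt_of_le_of_lt key hfin) (lt_irrefl _)

lemma distFun_to_zero (hΩ : MeasurableSet Ω) (hq_meas : Measurable q)
    (hq_int : IntegrableOn q Ω) {s : ℝ≥0∞} (hs : 0 < s) :
    ∃ t : ℝ, 0 ≤ t ∧ distFun Ω q t ≤ s := by
  set u : ℕ → Set (EuclideanSpace ℝ (Fin d)) :=
    fun n => {x | x ∈ Ω ∧ (1 + (n : ℝ)) < q x} with hu
  have hanti : Antitone u := by
    intro m n hmn x hx
    refine ⟨hx.1, lt_of_le_of_lt ?_ hx.2⟩
    have : (m : ℝ) ≤ (n : ℝ) := Nat.cast_le.2 hmn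
    linarith
  have hiInt : ⋂ n, u n = ∅ := by
    ext x
    simp only [mem_iInter, hu, mem_setOf_eq, mem_empty_iff_false, iff_false, not_forall]
    by_contra hcon
    push_neg at hcon
    obtain ⟨n, hn⟩ := exists_nat_gt (q x - 1)
    have := (hcon n).2
    linarith
  have hfin : ∃ n, volume (u n) ≠ ∞ := by
    refine ⟨0, ?_⟩
    have : volume (u 0) ≤ distFun Ω q 1 := by
      apply measure_mono
      intro x hx
      exact ⟨hx.1, by have := hx.2; norm_num at this ⊢; linarith⟩
    exact (lt_of_le_of_lt this (distFun_lt_top hΩ hq_int one_pos)).ne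
  have hmeas := Directed.measure_iInter (μ := volume) (s := u)
    (fun n => (distFun_meas hΩ hq_meas _).nullMeasurableSet) hanti.directed_ge hfin
  rw [hiInt, measure_empty] at hmeas
  have : ⨅ n, volume (u n) < s := hmeas ▸ hs
  obtain ⟨n, hn⟩ := iInf_lt_iff.1 this
  exact ⟨1 + (n : ℝ), by positivity, hn.le⟩

lemma lt_pseudoInv (hΩ : MeasurableSet Ω) (hq_meas : Measurable q)
    (hq_int : IntegrableOn q Ω) {t : ℝ} {s : ℝ≥0∞} (ht : 0 ≤ t) (hs : 0 < s)
    (h : s < distFun Ω q t) : t < pseudoInv Ω q s := by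
  rw [distFun_right_cont] at h
  obtain ⟨n, hn⟩ := lt_iSup_iff.1 h
  obtain ⟨t₁, ht₁0, ht₁⟩ := distFun_to_zero hΩ hq_meas hq_int hs
  have hne : {t' : ℝ | 0 ≤ t' ∧ distFun Ω q t' ≤ s}.Nonempty := ⟨t₁, ht₁0, ht₁⟩
  have hpos : (0:ℝ) < 1 / ((n : ℝ) + 1) := by positivity
  refine lt_of_lt_of_le (show t < t + 1 / ((n : ℝ) + 1) by linarith) (le_csInf hne ?_)
  intro t' ht'
  by_contra hcon
  push_neg at hcon
  exact absurd (lt_of_le_of_lt (le_trans (distFun_anti hcon.le) ht'.2) hn) (lt_irrefl _)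

lemma pseudoInv_anti (hΩ : MeasurableSet Ω) (hq_meas : Measurable q)
    (hq_int : IntegrableOn q Ω) {s s' : ℝ≥0∞} (hs : 0 < s) (hss' : s ≤ s') :
    pseudoInv Ω q s' ≤ pseudoInv Ω q s := by
  obtain ⟨t₁, ht₁0, ht₁⟩ := distFun_to_zero hΩ hq_meas hq_int hs
  exact csInf_le_csInf ⟨0, fun _ h => h.1⟩ ⟨t₁, ht₁0, ht₁⟩
    fun t ht => ⟨ht.1, ht.2.trans hss'⟩

lemma pseudoInv_measurable (hΩ : MeasurableSet Ω) (hq_meas : Measurable q)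
    (hq_int : IntegrableOn q Ω) : Measurable (pseudoInv Ω q) := by
  apply measurable_of_Iio
  intro c
  set V := pseudoInv Ω q ⁻¹' Iio c with hV
  have hV' : MeasurableSet (V \ {0}) := by
    apply Set.OrdConnected.measurableSet
    constructor
    intro x hx y hy z hz
    refine ⟨?_, ?_⟩
    · have h0x : 0 < x := (zero_le : (0:ℝ≥0∞) ≤ x).lt_of_ne (Ne.symm hx.2)
      have := pseudoInv_anti hΩ hq_meas hq_int h0x hz.1
      exact lt_of_le_of_lt this hx.1
    · have h0x : 0 < x := (zero_le : (0:ℝ≥0∞) ≤ x).lt_of_ne (Ne.symm hx.2)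
      exact (lt_of_lt_of_le h0x hz.1).ne'
  by_cases h0 : (0:ℝ≥0∞) ∈ V
  · have : V = (V \ {0}) ∪ {0} := by
      ext s
      simp only [mem_union, mem_diff, mem_singleton_iff]
      constructor
      · intro hs
        by_cases hs0 : s = 0
        · exact Or.inr hs0
        · exact Or.inl ⟨hs, hs0⟩
      · rintro (⟨hs, _⟩ | rfl)
        · exact hs
        · exact h0
    rw [this]
    exact hV'.union (measurableSet_singleton 0)
  · have : V = V \ {0} := by
      ext s
      simp only [mem_diff, mem_singleton_iff]
      refine ⟨fun hs => ⟨hs, ?_⟩, fun hs => hs.1⟩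
      rintro rfl
      exact h0 hs
    rw [this]
    exact hV'

lemma uFun_measurable (hσ : SigAdmissible Ω σ) :
    Measurable (fun x => aSig Ω σ ((σ x : ℝ) : EReal)) :=
  (aSig_mono.measurable).comp (measurable_coe_real_ereal.comp hσ.measurable_σ)

lemma sigRearr_measurable (hσ : SigAdmissible Ω σ) (hq_meas : Measurable q)
    (hq_int : IntegrableOn q Ω) : Measurable (sigRearr Ω σ q) := by
  unfold sigRearr
  apply Measurable.ite
  · exact (measurable_coe_real_ereal.comp hσ.measurable_σ) measurableSet_Iio
  · exact (pseudoInv_measurable hσ.measurableSet_Ω hq_meas hq_int).comp (uFun_measurable hσ)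
  · exact measurable_const

lemma sigRearr_nonneg (x : EuclideanSpace ℝ (Fin d)) : 0 ≤ sigRearr Ω σ q x := by
  unfold sigRearr
  split
  · exact pseudoInv_nonneg _
  · exact le_refl 0

/-- Equimeasurability of `q` and its σ-rearrangement. -/
lemma distFun_sigRearr (hσ : SigAdmissible Ω σ) (hq_meas : Measurable q)
    (hq_int : IntegrableOn q Ω) {t : ℝ} (ht : 0 < t) :
    volume {x | x ∈ Ω ∧ t < sigRearr Ω σ q x} = distFun Ω q t := by
  set Dt := distFun Ω q t with hDt
  set E := {x | x ∈ Ω ∧ t < sigRearr Ω σ q x} with hE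
  set F := {x | x ∈ Ω ∧ aSig Ω σ ((σ x : ℝ) : EReal) < Dt} with hF
  have hEF : E ⊆ F := by
    rintro x ⟨hxΩ, hxt⟩
    refine ⟨hxΩ, ?_⟩
    unfold sigRearr at hxt
    by_cases hcond : (σ x : EReal) < eMax Ω σ
    · rw [if_pos hcond] at hxt
      by_contra hge
      push_neg at hge
      exact absurd (lt_of_lt_of_le hxt (pseudoInv_le ht.le hge)) (lt_irrefl _)
    · rw [if_neg hcond] at hxt
      exact absurd (ht.trans hxt) (lt_irrefl _)
  have hFE : F \ E ⊆ {x | x ∈ Ω ∧ aSig Ω σ ((σ x : ℝ) : EReal) = 0} := by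
    rintro x ⟨⟨hxΩ, hxD⟩, hxE⟩
    refine ⟨hxΩ, ?_⟩
    by_contra hne
    have hupos : 0 < aSig Ω σ ((σ x : ℝ) : EReal) := (zero_le).lt_of_ne (Ne.symm hne)
    have hcond : (σ x : EReal) < eMax Ω σ := by
      by_contra hge
      push_neg at hge
      have h1 : volume Ω ≤ aSig Ω σ ((σ x : ℝ) : EReal) := by
        rw [← aSig_eMax hσ]
        exact aSig_mono hge
      exact absurd (lt_of_le_of_lt ((distFun_le t).trans h1) hxD) (lt_irrefl _)
    apply hxE
    refine ⟨hxΩ, ?_⟩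
    unfold sigRearr
    rw [if_pos hcond]
    exact lt_pseudoInv hσ.measurableSet_Ω hq_meas hq_int ht.le hupos hxD
  have hEFvol : volume E = volume F := by
    refine le_antisymm (measure_mono hEF) ?_
    calc volume F ≤ volume (E ∪ {x | x ∈ Ω ∧ aSig Ω σ ((σ x : ℝ) : EReal) = 0}) :=
          measure_mono fun x hx => by
            by_cases hxE : x ∈ E
            · exact Or.inl hxE
            · exact Or.inr (hFE ⟨hx, hxE⟩)
      _ ≤ volume E + volume {x | x ∈ Ω ∧ aSig Ω σ ((σ x : ℝ) : EReal) = 0} :=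
          measure_union_le _ _
      _ = volume E := by rw [null_zero hσ, add_zero]
  rw [hEFvol]
  rcases eq_or_lt_of_le (zero_le : (0:ℝ≥0∞) ≤ Dt) with h0 | hpos
  · have : F = ∅ := by
      ext x
      simp only [hF, mem_setOf_eq, mem_empty_iff_false, iff_false, not_and]
      intro _
      rw [← h0]
      exact fun h => (not_lt_bot h : False)
    rw [this, measure_empty, ← h0]
  · exact lemA hσ hpos (distFun_le t)

lemma meas_restrict_eq {S : Set (EuclideanSpace ℝ (Fin d))} (hS : MeasurableSet S)
    (φ : EuclideanSpace ℝ (Fin d) → ℝ) (t : ℝ) :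
    (volume.restrict S) {a | t < φ a} = volume {x | x ∈ S ∧ t < φ x} := by
  rw [Measure.restrict_apply' hS]
  congr 1
  ext x
  simp only [mem_inter_iff, mem_setOf_eq]
  exact and_comm

/-- Layer-cake for a set `S`. -/
lemma layercake_set {S : Set (EuclideanSpace ℝ (Fin d))} (hS : MeasurableSet S)
    {φ : EuclideanSpace ℝ (Fin d) → ℝ} (hφ : AEMeasurable φ (volume.restrict S))
    (hφn : 0 ≤ᵐ[volume.restrict S] φ) :
    ∫⁻ x in S, ENNReal.ofReal (φ x) = ∫⁻ t in Ioi (0:ℝ), volume {x | x ∈ S ∧ t < φ x} := by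
  rw [lintegral_eq_lintegral_meas_lt (volume.restrict S) hφn hφ]
  refine setLIntegral_congr_fun measurableSet_Ioi (fun t _ => ?_)
  exact meas_restrict_eq hS φ t

/-- The rearrangement has the same `∫⁻ ofReal` as `q`. -/
lemma sigRearr_lintegral_eq (hσ : SigAdmissible Ω σ) (hq_meas : Measurable q)
    (hq_int : IntegrableOn q Ω) (hq_nonneg : 0 ≤ᵐ[volume.restrict Ω] q) :
    ∫⁻ x in Ω, ENNReal.ofReal (sigRearr Ω σ q x)
      = ∫⁻ x in Ω, ENNReal.ofReal (q x) := by
  rw [layercake_set hσ.measurableSet_Ω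
      ((sigRearr_measurable hσ hq_meas hq_int).aemeasurable)
      (ae_of_all _ fun x => sigRearr_nonneg x),
    layercake_set hσ.measurableSet_Ω (hq_meas.aemeasurable) hq_nonneg]
  refine setLIntegral_congr_fun measurableSet_Ioi (fun t ht => ?_)
  exact distFun_sigRearr hσ hq_meas hq_int ht

lemma sigRearr_integrableOn (hσ : SigAdmissible Ω σ) (hq_meas : Measurable q)
    (hq_int : IntegrableOn q Ω) (hq_nonneg : 0 ≤ᵐ[volume.restrict Ω] q) :
    IntegrableOn (sigRearr Ω σ q) Ω := by
  refine ⟨(sigRearr_measurable hσ hq_meas hq_int).aestronglyMeasurable, ?_⟩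
  unfold HasFiniteIntegral
  have h1 : ∫⁻ x in Ω, ‖sigRearr Ω σ q x‖ₑ
      = ∫⁻ x in Ω, ENNReal.ofReal (sigRearr Ω σ q x) := by
    apply lintegral_congr
    intro x
    rw [← Real.enorm_eq_ofReal (sigRearr_nonneg x)]
  rw [h1, sigRearr_lintegral_eq hσ hq_meas hq_int hq_nonneg]
  refine lt_of_le_of_lt (lintegral_mono fun x => ?_) hq_int.2
  exact Real.ofReal_le_enorm (q x)

lemma sigRearr_integral_eq (hσ : SigAdmissible Ω σ) (hq_meas : Measurable q)
    (hq_int : IntegrableOn q Ω) (hq_nonneg : 0 ≤ᵐ[volume.restrict Ω] q) :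
    ∫ x in Ω, sigRearr Ω σ q x = ∫ x in Ω, q x := by
  rw [integral_eq_lintegral_of_nonneg_ae (ae_of_all _ fun x => sigRearr_nonneg x)
      (sigRearr_measurable hσ hq_meas hq_int).aestronglyMeasurable,
    integral_eq_lintegral_of_nonneg_ae hq_nonneg hq_int.aestronglyMeasurable,
    sigRearr_lintegral_eq hσ hq_meas hq_int hq_nonneg]

/-- Core comparison on strict sublevel sets of `σ` below `eMax`. -/
lemma sublevel_strict (hσ : SigAdmissible Ω σ) (hq_meas : Measurable q)
    (hq_int : IntegrableOn q Ω) (hq_nonneg : 0 ≤ᵐ[volume.restrict Ω] q)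
    {e : ℝ} (he : (e : EReal) < eMax Ω σ) :
    ∫ x in {x | x ∈ Ω ∧ (σ x : EReal) < (e : EReal)}, q x
      ≤ ∫ x in {x | x ∈ Ω ∧ (σ x : EReal) < (e : EReal)}, sigRearr Ω σ q x := by
  set g := sigRearr Ω σ q with hg
  set S := {x | x ∈ Ω ∧ (σ x : EReal) < (e : EReal)} with hS
  have hSmeas : MeasurableSet S := measSet hσ e
  have hSsub : S ⊆ Ω := fun x hx => hx.1
  have hq_nonneg' : 0 ≤ᵐ[volume.restrict S] q :=
    ae_restrict_of_ae_restrict_of_subset hSsub hq_nonneg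
  have hq_int' : IntegrableOn q S := hq_int.mono_set hSsub
  have hg_int : IntegrableOn g Ω := sigRearr_integrableOn hσ hq_meas hq_int hq_nonneg
  have hg_int' : IntegrableOn g S := hg_int.mono_set hSsub
  -- key measure comparison
  have hkey : ∀ t : ℝ, 0 < t →
      volume {x | x ∈ S ∧ t < q x} ≤ volume {x | x ∈ S ∧ t < g x} := by
    intro t ht
    set Dt := distFun Ω q t with hDt
    rcases eq_or_lt_of_le (zero_le : (0:ℝ≥0∞) ≤ Dt) with h0 | hDpos
    · have hmle : volume {x | x ∈ S ∧ t < q x} ≤ Dt :=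
        measure_mono fun x hx => ⟨hx.1.1, hx.2⟩
      rw [← h0] at hmle
      rw [le_antisymm hmle zero_le]
      exact zero_le
    · -- identify the g-side set
      set F := {x | x ∈ Ω ∧ (σ x : EReal) < (e : EReal)
          ∧ aSig Ω σ ((σ x : ℝ) : EReal) < Dt} with hF
      have hEF : {x | x ∈ S ∧ t < g x} ⊆ F := by
        rintro x ⟨⟨hxΩ, hxe⟩, hxt⟩
        refine ⟨hxΩ, hxe, ?_⟩
        rw [hg] at hxt
        unfold sigRearr at hxt
        by_cases hcond : (σ x : EReal) < eMax Ω σ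
        · rw [if_pos hcond] at hxt
          by_contra hge
          push_neg at hge
          exact absurd (lt_of_lt_of_le hxt (pseudoInv_le ht.le hge)) (lt_irrefl _)
        · rw [if_neg hcond] at hxt
          exact absurd (ht.trans hxt) (lt_irrefl _)
      have hFE : F \ {x | x ∈ S ∧ t < g x}
          ⊆ {x | x ∈ Ω ∧ aSig Ω σ ((σ x : ℝ) : EReal) = 0} := by
        rintro x ⟨⟨hxΩ, hxe, hxD⟩, hxE⟩
        refine ⟨hxΩ, ?_⟩
        by_contra hne
        have hupos : 0 < aSig Ω σ ((σ x : ℝ) : EReal) := (zero_le).lt_of_ne (Ne.symm hne)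
        have hcond : (σ x : EReal) < eMax Ω σ := lt_of_lt_of_le hxe he.le
        apply hxE
        refine ⟨⟨hxΩ, hxe⟩, ?_⟩
        rw [hg]
        unfold sigRearr
        rw [if_pos hcond]
        exact lt_pseudoInv hσ.measurableSet_Ω hq_meas hq_int ht.le hupos hxD
      have hFvol : volume F = min (aSig Ω σ (e : EReal)) Dt := lemA' hσ he hDpos
      have hEvol : volume {x | x ∈ S ∧ t < g x} = volume F := by
        refine le_antisymm (measure_mono hEF) ?_
        calc volume F
            ≤ volume ({x | x ∈ S ∧ t < g x}
                ∪ {x | x ∈ Ω ∧ aSig Ω σ ((σ x : ℝ) : EReal) = 0}) :=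
              measure_mono fun x hx => by
                by_cases hxE : x ∈ {x | x ∈ S ∧ t < g x}
                · exact Or.inl hxE
                · exact Or.inr (hFE ⟨hx, hxE⟩)
          _ ≤ volume {x | x ∈ S ∧ t < g x}
                + volume {x | x ∈ Ω ∧ aSig Ω σ ((σ x : ℝ) : EReal) = 0} :=
              measure_union_le _ _
          _ = volume {x | x ∈ S ∧ t < g x} := by rw [null_zero hσ, add_zero]
      rw [hEvol, hFvol]
      refine le_min ?_ (measure_mono fun x hx => ⟨hx.1.1, hx.2⟩)
      have : {x | x ∈ S ∧ t < q x} ⊆ {x | x ∈ Ω ∧ (σ x : EReal) < (e : EReal)} :=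
        fun x hx => hx.1
      exact measure_mono this
  -- lintegral comparison
  have hlin : ∫⁻ x in S, ENNReal.ofReal (q x) ≤ ∫⁻ x in S, ENNReal.ofReal (g x) := by
    rw [layercake_set hSmeas (hq_meas.aemeasurable) hq_nonneg',
      layercake_set hSmeas ((sigRearr_measurable hσ hq_meas hq_int).aemeasurable)
        (ae_of_all _ fun x => sigRearr_nonneg x)]
    refine setLIntegral_mono' measurableSet_Ioi fun t ht => hkey t ht
  have hgfin : ∫⁻ x in S, ENNReal.ofReal (g x) < ∞ := by
    refine lt_of_le_of_lt (lintegral_mono_set hSsub) ?_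
    rw [sigRearr_lintegral_eq hσ hq_meas hq_int hq_nonneg]
    refine lt_of_le_of_lt (lintegral_mono fun x => Real.ofReal_le_enorm (q x)) hq_int.2
  rw [integral_eq_lintegral_of_nonneg_ae hq_nonneg' hq_int'.aestronglyMeasurable,
    integral_eq_lintegral_of_nonneg_ae (ae_of_all _ fun x => sigRearr_nonneg x)
      hg_int'.aestronglyMeasurable]
  exact ENNReal.toReal_mono hgfin.ne hlin

/-- The sublevel inequality for closed sublevel sets, all real `e`. -/
lemma sublevel_ineq (hσ : SigAdmissible Ω σ) (hq_meas : Measurable q)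
    (hq_int : IntegrableOn q Ω) (hq_nonneg : 0 ≤ᵐ[volume.restrict Ω] q) (e : ℝ) :
    ∫ x in {x | x ∈ Ω ∧ σ x ≤ e}, q x
      ≤ ∫ x in {x | x ∈ Ω ∧ σ x ≤ e}, sigRearr Ω σ q x := by
  set g := sigRearr Ω σ q with hg
  have hΩ := hσ.measurableSet_Ω
  have hg_int : IntegrableOn g Ω := sigRearr_integrableOn hσ hq_meas hq_int hq_nonneg
  rcases lt_or_ge (e : EReal) (eMax Ω σ) with he | he
  · -- a.e. equality of closed and open sublevel sets
    have haeq : {x | x ∈ Ω ∧ (σ x : EReal) < (e : EReal)} =ᵐ[volume] {x | x ∈ Ω ∧ σ x ≤ e} := by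
      rw [ae_eq_set]
      constructor
      · have hsub0 : {x | x ∈ Ω ∧ (σ x : EReal) < (e : EReal)} \ {x | x ∈ Ω ∧ σ x ≤ e}
            ⊆ (∅ : Set (EuclideanSpace ℝ (Fin d))) := by
          intro x hx
          simp only [mem_diff, mem_setOf_eq] at hx
          exact absurd ⟨hx.1.1, (EReal.coe_lt_coe_iff.1 hx.1.2).le⟩ hx.2
        exact measure_mono_null hsub0 measure_empty
      · refine measure_mono_null ?_ (hσ.levelSets e he)
        intro x hx
        simp only [mem_diff, mem_setOf_eq] at hx
        obtain ⟨⟨hxΩ, hle⟩, hnx⟩ := hx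
        refine mem_setOf.2 ⟨hxΩ, ?_⟩
        by_contra hne
        exact hnx ⟨hxΩ, EReal.coe_lt_coe_iff.2 (lt_of_le_of_ne hle hne)⟩
    calc ∫ x in {x | x ∈ Ω ∧ σ x ≤ e}, q x
        = ∫ x in {x | x ∈ Ω ∧ (σ x : EReal) < (e : EReal)}, q x :=
          (setIntegral_congr_set haeq).symm
      _ ≤ ∫ x in {x | x ∈ Ω ∧ (σ x : EReal) < (e : EReal)}, g x :=
          sublevel_strict hσ hq_meas hq_int hq_nonneg he
      _ = ∫ x in {x | x ∈ Ω ∧ σ x ≤ e}, g x := setIntegral_congr_set haeq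
  · -- e ≥ eMax : the sublevel set is essentially everything that matters
    set S := {x | x ∈ Ω ∧ σ x ≤ e} with hS
    have hSmeas : MeasurableSet S := hΩ.inter (hσ.measurable_σ measurableSet_Iic)
    have hSsub : S ⊆ Ω := fun x hx => hx.1
    have h1 : ∫ x in S, q x ≤ ∫ x in Ω, q x :=
      setIntegral_mono_set hq_int hq_nonneg (HasSubset.Subset.eventuallyLE hSsub)
    have h2 : ∫ x in Ω, q x = ∫ x in Ω, g x :=
      (sigRearr_integral_eq hσ hq_meas hq_int hq_nonneg).symm
    have h3 : ∫ x in Ω, g x = ∫ x in S, g x := by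
      have hunion : S ∪ (Ω \ S) = Ω := union_diff_cancel hSsub
      have hzero : ∫ x in Ω \ S, g x = 0 := by
        refine setIntegral_eq_zero_of_forall_eq_zero fun x hx => ?_
        have hlt : e < σ x := lt_of_not_ge fun hle => hx.2 ⟨hx.1, hle⟩
        have hcond : ¬ ((σ x : EReal) < eMax Ω σ) := by
          push_neg
          exact le_trans he (EReal.coe_le_coe_iff.2 hlt.le)
        rw [hg]
        unfold sigRearr
        rw [if_neg hcond]
      have hgS : IntegrableOn g S := hg_int.mono_set hSsub
      have hgD : IntegrableOn g (Ω \ S) := hg_int.mono_set diff_subset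
      rw [← hunion, setIntegral_union disjoint_sdiff_self_right (hΩ.diff hSmeas) hgS hgD,
        hzero, add_zero]
    linarith [h1, h2, h3]

/-- The superlevel inequality. -/
lemma superlevel_ineq (hσ : SigAdmissible Ω σ) (hq_meas : Measurable q)
    (hq_int : IntegrableOn q Ω) (hq_nonneg : 0 ≤ᵐ[volume.restrict Ω] q) (e : ℝ) :
    0 ≤ ∫ x in {x | x ∈ Ω ∧ e < σ x}, (q x - sigRearr Ω σ q x) := by
  set g := sigRearr Ω σ q with hg
  have hΩ := hσ.measurableSet_Ω
  have hg_int : IntegrableOn g Ω := sigRearr_integrableOn hσ hq_meas hq_int hq_nonneg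
  set Sle := {x | x ∈ Ω ∧ σ x ≤ e} with hSle
  set Sgt := {x | x ∈ Ω ∧ e < σ x} with hSgt
  have hSleM : MeasurableSet Sle := hΩ.inter (hσ.measurable_σ measurableSet_Iic)
  have hSgtM : MeasurableSet Sgt := hΩ.inter (hσ.measurable_σ measurableSet_Ioi)
  have hdisj : Disjoint Sle Sgt := by
    rw [disjoint_left]
    rintro x ⟨_, h1⟩ ⟨_, h2⟩
    exact absurd h1 (not_le.2 h2)
  have hunion : Sle ∪ Sgt = Ω := by
    ext x
    simp only [hSle, hSgt, mem_union, mem_setOf_eq]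
    constructor
    · rintro (⟨hx, _⟩ | ⟨hx, _⟩) <;> exact hx
    · intro hx
      rcases le_or_gt (σ x) e with h | h
      · exact Or.inl ⟨hx, h⟩
      · exact Or.inr ⟨hx, h⟩
  have hqle : IntegrableOn q Sle := hq_int.mono_set fun x hx => hx.1
  have hqgt : IntegrableOn q Sgt := hq_int.mono_set fun x hx => hx.1
  have hgle : IntegrableOn g Sle := hg_int.mono_set fun x hx => hx.1
  have hggt : IntegrableOn g Sgt := hg_int.mono_set fun x hx => hx.1
  have hsplit_q : ∫ x in Ω, q x = (∫ x in Sle, q x) + ∫ x in Sgt, q x := by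
    rw [← setIntegral_union hdisj hSgtM hqle hqgt, hunion]
  have hsplit_g : ∫ x in Ω, g x = (∫ x in Sle, g x) + ∫ x in Sgt, g x := by
    rw [← setIntegral_union hdisj hSgtM hgle hggt, hunion]
  have htot : ∫ x in Ω, g x = ∫ x in Ω, q x :=
    sigRearr_integral_eq hσ hq_meas hq_int hq_nonneg
  have hle : ∫ x in Sle, q x ≤ ∫ x in Sle, g x :=
    sublevel_ineq hσ hq_meas hq_int hq_nonneg e
  have hsub : ∫ x in Sgt, (q x - g x) = (∫ x in Sgt, q x) - ∫ x in Sgt, g x :=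
    integral_sub hqgt hggt
  linarith

/-- The weighted inequality, for measurable `q`. -/
lemma weighted_ineq (hσ : SigAdmissible Ω σ) (hq_meas : Measurable q)
    (hq_int : IntegrableOn q Ω) (hq_nonneg : 0 ≤ᵐ[volume.restrict Ω] q)
    (h_energy : IntegrableOn (fun x => σ x * (q x - sigRearr Ω σ q x)) Ω) :
    0 ≤ ∫ x in Ω, σ x * (q x - sigRearr Ω σ q x) := by
  classical
  set g := sigRearr Ω σ q with hgdef
  set h : EuclideanSpace ℝ (Fin d) → ℝ := fun x => q x - g x with hhdef
  have hΩ := hσ.measurableSet_Ω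
  have hg_meas : Measurable g := sigRearr_measurable hσ hq_meas hq_int
  have hg_int : IntegrableOn g Ω := sigRearr_integrableOn hσ hq_meas hq_int hq_nonneg
  have hh_meas : Measurable h := hq_meas.sub hg_meas
  set A : Set ((EuclideanSpace ℝ (Fin d)) × ℝ) := {p | 0 ≤ p.2 ∧ p.2 < σ p.1} with hA
  set B : Set ((EuclideanSpace ℝ (Fin d)) × ℝ) := {p | σ p.1 ≤ p.2 ∧ p.2 < 0} with hB
  have hAmeas : MeasurableSet A := by
    have h1 : MeasurableSet {p : (EuclideanSpace ℝ (Fin d)) × ℝ | 0 ≤ p.2} :=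
      measurable_snd measurableSet_Ici
    have h2 : MeasurableSet {p : (EuclideanSpace ℝ (Fin d)) × ℝ | p.2 < σ p.1} :=
      measurableSet_lt measurable_snd (hσ.measurable_σ.comp measurable_fst)
    exact h1.inter h2
  have hBmeas : MeasurableSet B := by
    have h1 : MeasurableSet {p : (EuclideanSpace ℝ (Fin d)) × ℝ | σ p.1 ≤ p.2} :=
      measurableSet_le (hσ.measurable_σ.comp measurable_fst) measurable_snd
    have h2 : MeasurableSet {p : (EuclideanSpace ℝ (Fin d)) × ℝ | p.2 < 0} :=
      measurable_snd measurableSet_Iio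
    exact h1.inter h2
  set w : ((EuclideanSpace ℝ (Fin d)) × ℝ) → ℝ := fun p =>
    h p.1 * (A.indicator (fun _ => (1:ℝ)) p - B.indicator (fun _ => (1:ℝ)) p) with hw
  have hw_meas : Measurable w :=
    (hh_meas.comp measurable_fst).mul
      ((measurable_const.indicator hAmeas).sub (measurable_const.indicator hBmeas))
  -- slice descriptions
  have hslice : ∀ x e, w (x, e) = h x * ((Ico (0:ℝ) (σ x)).indicator (fun _ => (1:ℝ)) e
      - (Ico (σ x) (0:ℝ)).indicator (fun _ => (1:ℝ)) e) := by
    intro x e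
    simp only [hw, hA, hB, Set.indicator_apply, mem_setOf_eq, mem_Ico]
  have hslice_int : ∀ x, Integrable (fun e => w (x, e)) volume := by
    intro x
    have h1 : Integrable ((Ico (0:ℝ) (σ x)).indicator (fun _ => (1:ℝ))) volume := by
      rw [integrable_indicator_iff measurableSet_Ico]
      exact integrableOn_const measure_Ico_lt_top.ne
    have h2 : Integrable ((Ico (σ x) (0:ℝ)).indicator (fun _ => (1:ℝ))) volume := by
      rw [integrable_indicator_iff measurableSet_Ico]
      exact integrableOn_const measure_Ico_lt_top.ne
    have := ((h1.sub h2).const_mul (h x)).congr (ae_of_all _ fun e => (hslice x e).symm)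
    exact this
  have hind : ∀ a b : ℝ, ∫ e, (Ico a b).indicator (fun _ => (1:ℝ)) e = max (b - a) 0 := by
    intro a b
    rw [integral_indicator_const (1:ℝ) measurableSet_Ico, Real.volume_real_Ico, smul_eq_mul,
      mul_one]
  have hint_e : ∀ x, ∫ e, w (x, e) = h x * σ x := by
    intro x
    have hrw : ∫ e, w (x, e) = ∫ e, h x * ((Ico (0:ℝ) (σ x)).indicator (fun _ => (1:ℝ)) e
        - (Ico (σ x) (0:ℝ)).indicator (fun _ => (1:ℝ)) e) :=
      integral_congr_ae (ae_of_all _ fun e => hslice x e)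
    have h1 : Integrable ((Ico (0:ℝ) (σ x)).indicator (fun _ => (1:ℝ))) volume := by
      rw [integrable_indicator_iff measurableSet_Ico]
      exact integrableOn_const measure_Ico_lt_top.ne
    have h2 : Integrable ((Ico (σ x) (0:ℝ)).indicator (fun _ => (1:ℝ))) volume := by
      rw [integrable_indicator_iff measurableSet_Ico]
      exact integrableOn_const measure_Ico_lt_top.ne
    rw [hrw, integral_const_mul, integral_sub h1 h2, hind, hind]
    rcases le_total 0 (σ x) with hx | hx
    · rw [max_eq_left (by linarith), max_eq_right (by linarith)]
      ring
    · rw [max_eq_right (by linarith), max_eq_left (by linarith)]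
      ring
  have hnorm_e : ∀ x, ∫ e, ‖w (x, e)‖ = ‖σ x * h x‖ := by
    intro x
    have h1 : Integrable ((Ico (0:ℝ) (σ x)).indicator (fun _ => (1:ℝ))) volume := by
      rw [integrable_indicator_iff measurableSet_Ico]
      exact integrableOn_const measure_Ico_lt_top.ne
    have h2 : Integrable ((Ico (σ x) (0:ℝ)).indicator (fun _ => (1:ℝ))) volume := by
      rw [integrable_indicator_iff measurableSet_Ico]
      exact integrableOn_const measure_Ico_lt_top.ne
    have key : ∀ e, ‖w (x, e)‖ = ‖h x‖ * ((Ico (0:ℝ) (σ x)).indicator (fun _ => (1:ℝ)) e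
        + (Ico (σ x) (0:ℝ)).indicator (fun _ => (1:ℝ)) e) := by
      intro e
      rw [hslice x e, norm_mul]
      congr 1
      rcases le_total 0 (σ x) with hx | hx
      · have h2z : (Ico (σ x) (0:ℝ)).indicator (fun _ => (1:ℝ)) e = 0 := by
          rw [Ico_eq_empty (not_lt.2 hx)]
          simp
        rw [h2z, sub_zero, add_zero,
          Real.norm_of_nonneg (Set.indicator_nonneg (fun _ _ => zero_le_one) e)]
      · have h1z : (Ico (0:ℝ) (σ x)).indicator (fun _ => (1:ℝ)) e = 0 := by
          rw [Ico_eq_empty (not_lt.2 hx)]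
          simp
        rw [h1z, zero_sub, zero_add, norm_neg,
          Real.norm_of_nonneg (Set.indicator_nonneg (fun _ _ => zero_le_one) e)]
    have hrw : ∫ e, ‖w (x, e)‖ = ∫ e, ‖h x‖ * ((Ico (0:ℝ) (σ x)).indicator (fun _ => (1:ℝ)) e
        + (Ico (σ x) (0:ℝ)).indicator (fun _ => (1:ℝ)) e) :=
      integral_congr_ae (ae_of_all _ fun e => key e)
    rw [hrw, integral_const_mul, integral_add h1 h2, hind, hind, norm_mul]
    rcases le_total 0 (σ x) with hx | hx
    · rw [max_eq_left (by linarith), max_eq_right (by linarith),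
        Real.norm_of_nonneg hx]
      ring
    · rw [max_eq_right (by linarith), max_eq_left (by linarith),
        Real.norm_of_nonpos hx]
      ring
  have hw_int : Integrable w ((volume.restrict Ω).prod volume) := by
    rw [integrable_prod_iff hw_meas.aestronglyMeasurable]
    refine ⟨ae_of_all _ fun x => hslice_int x, ?_⟩
    refine Integrable.congr h_energy.norm (ae_of_all _ fun x => ?_)
    show ‖σ x * (q x - g x)‖ = ∫ y, ‖w (x, y)‖
    rw [hnorm_e x]
  have hswap : ∫ x in Ω, ∫ e, w (x, e) = ∫ e, ∫ x in Ω, w (x, e) :=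
    integral_integral_swap hw_int
  have goal_eq : ∫ x in Ω, σ x * (q x - g x) = ∫ e, ∫ x in Ω, w (x, e) := by
    rw [← hswap]
    refine integral_congr_ae (ae_of_all _ fun x => ?_)
    show σ x * (q x - g x) = ∫ y, w (x, y)
    rw [hint_e x]
    ring
  rw [goal_eq]
  refine integral_nonneg fun e => ?_
  show (0:ℝ) ≤ ∫ x in Ω, w (x, e)
  rcases le_or_gt 0 e with he | he
  · have hfun : (fun x => w (x, e)) = fun x => ({y | e < σ y}).indicator h x := by
      funext x
      rw [hslice x e]
      simp only [Set.indicator_apply, mem_Ico, mem_setOf_eq]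
      by_cases hcond : e < σ x
      · rw [if_pos (⟨he, hcond⟩ : 0 ≤ e ∧ e < σ x),
          if_neg (fun hc : σ x ≤ e ∧ e < 0 => absurd (lt_of_le_of_lt he hc.2) (lt_irrefl 0)),
          if_pos hcond]
        ring
      · rw [if_neg (fun hc : 0 ≤ e ∧ e < σ x => hcond hc.2),
          if_neg (fun hc : σ x ≤ e ∧ e < 0 => absurd (lt_of_le_of_lt he hc.2) (lt_irrefl 0)),
          if_neg hcond]
        ring
    rw [hfun, setIntegral_indicator (measurableSet_lt measurable_const hσ.measurable_σ)]
    have hseteq : Ω ∩ {y | e < σ y} = {x | x ∈ Ω ∧ e < σ x} := by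
      ext x
      simp only [mem_inter_iff, mem_setOf_eq]
    rw [hseteq]
    exact superlevel_ineq hσ hq_meas hq_int hq_nonneg e
  · have hfun : (fun x => w (x, e)) = fun x => -(({y | σ y ≤ e}).indicator h x) := by
      funext x
      rw [hslice x e]
      simp only [Set.indicator_apply, mem_Ico, mem_setOf_eq]
      by_cases hcond : σ x ≤ e
      · rw [if_neg (fun hc : 0 ≤ e ∧ e < σ x => absurd hc.1 (not_le.2 he)),
          if_pos (⟨hcond, he⟩ : σ x ≤ e ∧ e < 0), if_pos hcond]
        ring
      · rw [if_neg (fun hc : 0 ≤ e ∧ e < σ x => absurd hc.1 (not_le.2 he)),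
          if_neg (fun hc : σ x ≤ e ∧ e < 0 => hcond hc.1), if_neg hcond]
        ring
    rw [hfun, integral_neg, setIntegral_indicator (measurableSet_le hσ.measurable_σ
      measurable_const)]
    have hseteq : Ω ∩ {y | σ y ≤ e} = {x | x ∈ Ω ∧ σ x ≤ e} := by
      ext x
      simp only [mem_inter_iff, mem_setOf_eq]
    rw [hseteq, neg_nonneg]
    have hq_s : IntegrableOn q {x | x ∈ Ω ∧ σ x ≤ e} := hq_int.mono_set fun x hx => hx.1
    have hg_s : IntegrableOn g {x | x ∈ Ω ∧ σ x ≤ e} := hg_int.mono_set fun x hx => hx.1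
    have hsubl := sublevel_ineq hσ hq_meas hq_int hq_nonneg e
    have hsub : ∫ x in {x | x ∈ Ω ∧ σ x ≤ e}, h x
        = (∫ x in {x | x ∈ Ω ∧ σ x ≤ e}, q x) - ∫ x in {x | x ∈ Ω ∧ σ x ≤ e}, g x :=
      integral_sub hq_s hg_s
    linarith

end HLAux

end HLAux

/-- generalized Hardy–Littlewood inequality: for admissible `σ` with
finite `B_σ` and any nonnegative `f ∈ L¹(Ω)`, `∫_Ω σ(x)(f(x) − f^{*σ}(x)) dx ≥ 0`. -/
theorem generalized_hardy_littlewood {d : ℕ} (Ω : Set (EuclideanSpace ℝ (Fin d)))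
    (σ : EuclideanSpace ℝ (Fin d) → ℝ) (hσ : SigAdmissible Ω σ) (hB : BSigFinite Ω σ)
    (f : EuclideanSpace ℝ (Fin d) → ℝ) (hf_nonneg : ∀ x ∈ Ω, 0 ≤ f x)
    (hf_int : MeasureTheory.IntegrableOn f Ω)
    (h_int_energy : MeasureTheory.IntegrableOn (fun x => σ x * (f x - sigRearr Ω σ f x)) Ω) :
    0 ≤ ∫ x in Ω, σ x * (f x - sigRearr Ω σ f x) := by
  have hΩ := hσ.measurableSet_Ω
  set f' := hf_int.1.mk f with hf'def
  have hf'_meas : Measurable f' := hf_int.1.stronglyMeasurable_mk.measurable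
  have hff' : f =ᵐ[volume.restrict Ω] f' := hf_int.1.ae_eq_mk
  have hnull : volume ({x | f x ≠ f' x} ∩ Ω) = 0 := by
    have h1 := hff'
    rw [Filter.EventuallyEq, ae_iff] at h1
    rw [← Measure.restrict_apply' hΩ]
    exact h1
  have hdist : distFun Ω f = distFun Ω f' := by
    funext t
    unfold distFun
    have hsub1 : {x | x ∈ Ω ∧ t < f x}
        ⊆ {x | x ∈ Ω ∧ t < f' x} ∪ ({x | f x ≠ f' x} ∩ Ω) := by
      rintro x ⟨hxΩ, hxt⟩
      by_cases hfe : f x = f' x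
      · exact Or.inl ⟨hxΩ, hfe ▸ hxt⟩
      · exact Or.inr ⟨hfe, hxΩ⟩
    have hsub2 : {x | x ∈ Ω ∧ t < f' x}
        ⊆ {x | x ∈ Ω ∧ t < f x} ∪ ({x | f x ≠ f' x} ∩ Ω) := by
      rintro x ⟨hxΩ, hxt⟩
      by_cases hfe : f x = f' x
      · exact Or.inl ⟨hxΩ, hfe ▸ hxt⟩
      · exact Or.inr ⟨hfe, hxΩ⟩
    refine le_antisymm ?_ ?_
    · calc volume {x | x ∈ Ω ∧ t < f x}
          ≤ volume ({x | x ∈ Ω ∧ t < f' x} ∪ ({x | f x ≠ f' x} ∩ Ω)) := measure_mono hsub1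
        _ ≤ volume {x | x ∈ Ω ∧ t < f' x} + volume ({x | f x ≠ f' x} ∩ Ω) :=
            measure_union_le _ _
        _ = volume {x | x ∈ Ω ∧ t < f' x} := by rw [hnull, add_zero]
    · calc volume {x | x ∈ Ω ∧ t < f' x}
          ≤ volume ({x | x ∈ Ω ∧ t < f x} ∪ ({x | f x ≠ f' x} ∩ Ω)) := measure_mono hsub2
        _ ≤ volume {x | x ∈ Ω ∧ t < f x} + volume ({x | f x ≠ f' x} ∩ Ω) :=
            measure_union_le _ _
        _ = volume {x | x ∈ Ω ∧ t < f x} := by rw [hnull, add_zero]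
  have hsig : sigRearr Ω σ f = sigRearr Ω σ f' := by
    funext x
    unfold sigRearr pseudoInv
    rw [hdist]
  have hf'_int : IntegrableOn f' Ω := (integrable_congr hff').1 hf_int
  have hf'_nonneg : 0 ≤ᵐ[volume.restrict Ω] f' := by
    have h0 : 0 ≤ᵐ[volume.restrict Ω] f :=
      (ae_restrict_mem hΩ).mono fun x hx => hf_nonneg x hx
    filter_upwards [h0, hff'] with x h1 h2
    rw [← h2]
    exact h1
  have henergy' : IntegrableOn (fun x => σ x * (f' x - sigRearr Ω σ f' x)) Ω := by
    refine (integrable_congr ?_).1 h_int_energy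
    filter_upwards [hff'] with x hx
    rw [hx, hsig]
  have hgoal := HLAux.weighted_ineq hσ hf'_meas hf'_int hf'_nonneg henergy'
  calc (0:ℝ) ≤ ∫ x in Ω, σ x * (f' x - sigRearr Ω σ f' x) := hgoal
    _ = ∫ x in Ω, σ x * (f x - sigRearr Ω σ f x) := by
        refine integral_congr_ae ?_
        filter_upwards [hff'] with x hx
        rw [hx, hsig]
end

section
/- Let σ be a measurable function on a domain Ω ⊂ ℝ^d (d ≥ 1) satisfying the admissibility assumptions for σ-rearrangements. Then the level sets of the composed function a_σ ∘ σ are of zero measure on {σ < e_max}: for every μ ≥ 0, meas{x ∈ Ω : a_σ(σ(x)) = μ and σ(x) < e_max} = 0. -/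
open MeasureTheory Set Filter Metric
open scoped ENNReal NNReal

/-- (Lemma on `a_σ`, item iii)): the level sets of `a_σ ∘ σ` on
`{σ < e_max}` have zero measure. -/
theorem aSig_comp_levelSets {d : ℕ} (Ω : Set (EuclideanSpace ℝ (Fin d)))
    (σ : EuclideanSpace ℝ (Fin d) → ℝ) (hσ : SigAdmissible Ω σ) :
    ∀ μ : ℝ≥0∞,
      volume {x | x ∈ Ω ∧ aSig Ω σ (σ x : EReal) = μ ∧ (σ x : EReal) < eMax Ω σ} = 0 := by

  intro μ
  classical
  set E : Set ℝ := {e | (e : EReal) < eMax Ω σ ∧ aSig Ω σ (e : EReal) = μ} with hE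
  -- finiteness of the common value on E
  have hfin : ∀ e ∈ E, aSig Ω σ (e : EReal) ≠ ⊤ := by
    rintro e ⟨he, hae⟩
    obtain ⟨e', he', hee'⟩ := lt_sSup_iff.mp he
    have hmono : aSig Ω σ (e : EReal) ≤ aSig Ω σ e' :=
      measure_mono fun x hx => ⟨hx.1, lt_trans hx.2 hee'⟩
    have : aSig Ω σ e' ≠ ⊤ := ne_top_of_lt he'
    exact fun htop => this (top_le_iff.mp (htop ▸ hmono))
  -- measurability of sublevel sets
  have hmeas : ∀ e : ℝ, MeasurableSet {x | x ∈ Ω ∧ (σ x : EReal) < (e : EReal)} := by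
    intro e
    have : {x | x ∈ Ω ∧ (σ x : EReal) < (e : EReal)} = Ω ∩ σ ⁻¹' (Iio e) := by
      ext x; simp [EReal.coe_lt_coe_iff]
    rw [this]
    exact hσ.measurableSet_Ω.inter (hσ.measurable_σ measurableSet_Iio)
  -- key: between two points of E, layers are null
  have key : ∀ d ∈ E, ∀ d' ∈ E, volume {x | x ∈ Ω ∧ d ≤ σ x ∧ σ x < d'} = 0 := by
    intro d hd d' hd'
    rcases le_or_gt d' d with h | h
    · have : {x | x ∈ Ω ∧ d ≤ σ x ∧ σ x < d'} = ∅ := by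
        ext x
        simp only [Set.mem_setOf_eq, Set.mem_empty_iff_false, iff_false]
        rintro ⟨-, h1, h2⟩
        exact absurd (lt_of_le_of_lt h1 h2) (not_lt.mpr h)
      simp [this]
    · have hsub : {x | x ∈ Ω ∧ (σ x : EReal) < (d : EReal)}
          ⊆ {x | x ∈ Ω ∧ (σ x : EReal) < (d' : EReal)} :=
        fun x hx => ⟨hx.1, lt_trans hx.2 (by exact_mod_cast h)⟩
      have h1 : {x | x ∈ Ω ∧ d ≤ σ x ∧ σ x < d'}
          ⊆ {x | x ∈ Ω ∧ (σ x : EReal) < (d' : EReal)}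
            \ {x | x ∈ Ω ∧ (σ x : EReal) < (d : EReal)} := by
        rintro x ⟨hx, h2, h3⟩
        exact ⟨⟨hx, by exact_mod_cast h3⟩,
          fun hc => absurd (EReal.coe_lt_coe_iff.mp hc.2) (not_lt.mpr h2)⟩
      refine measure_mono_null h1 ?_
      rw [measure_diff hsub (hmeas d).nullMeasurableSet (hfin d hd)]
      have e1 : volume {x | x ∈ Ω ∧ (σ x : EReal) < (d : EReal)} = μ := hd.2
      have e2 : volume {x | x ∈ Ω ∧ (σ x : EReal) < (d' : EReal)} = μ := hd'.2
      rw [e1, e2, tsub_self]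
  -- the covering sets
  set A : Set (EuclideanSpace ℝ (Fin d)) :=
    {x | x ∈ Ω ∧ σ x ∈ E ∧ ∀ e ∈ E, σ x ≤ e} with hA
  set B : Set (EuclideanSpace ℝ (Fin d)) :=
    {x | x ∈ Ω ∧ σ x ∈ E ∧ ∀ e ∈ E, e ≤ σ x} with hB
  set C : ℚ × ℚ → Set (EuclideanSpace ℝ (Fin d)) := fun p =>
    {x | x ∈ Ω ∧ (p.1 : ℝ) ≤ σ x ∧ σ x < (p.2 : ℝ)
      ∧ (∃ e ∈ E, e ≤ (p.1 : ℝ)) ∧ (∃ e ∈ E, (p.2 : ℝ) ≤ e)} with hC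
  have hAnull : volume A = 0 := by
    rcases A.eq_empty_or_nonempty with h | ⟨x₀, hx₀⟩
    · simp [h]
    · have hc : σ x₀ ∈ E := hx₀.2.1
      refine measure_mono_null (fun x hx => ?_) (hσ.levelSets (σ x₀) hc.1)
      exact ⟨hx.1, le_antisymm (hx.2.2 _ hc) (hx₀.2.2 _ hx.2.1)⟩
  have hBnull : volume B = 0 := by
    rcases B.eq_empty_or_nonempty with h | ⟨x₀, hx₀⟩
    · simp [h]
    · have hc : σ x₀ ∈ E := hx₀.2.1
      refine measure_mono_null (fun x hx => ?_) (hσ.levelSets (σ x₀) hc.1)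
      exact ⟨hx.1, le_antisymm (hx₀.2.2 _ hx.2.1) (hx.2.2 _ hc)⟩
  have hCnull : ∀ p : ℚ × ℚ, volume (C p) = 0 := by
    intro p
    rcases (C p).eq_empty_or_nonempty with h | ⟨x₀, hx₀⟩
    · simp [h]
    · obtain ⟨e₁, he₁, he₁le⟩ := hx₀.2.2.2.1
      obtain ⟨e₂, he₂, he₂le⟩ := hx₀.2.2.2.2
      refine measure_mono_null (fun x hx => ?_) (key e₁ he₁ e₂ he₂)
      exact ⟨hx.1, le_trans he₁le hx.2.1, lt_of_lt_of_le hx.2.2.1 he₂le⟩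
  -- covering
  have hcov : {x | x ∈ Ω ∧ aSig Ω σ (σ x : EReal) = μ ∧ (σ x : EReal) < eMax Ω σ}
      ⊆ A ∪ B ∪ ⋃ p : ℚ × ℚ, C p := by
    rintro x ⟨hxΩ, hxa, hxlt⟩
    have hxE : σ x ∈ E := ⟨hxlt, hxa⟩
    by_cases h1 : ∃ e ∈ E, e < σ x
    · by_cases h2 : ∃ e ∈ E, σ x < e
      · obtain ⟨e₁, he₁, he₁lt⟩ := h1
        obtain ⟨e₂, he₂, he₂lt⟩ := h2
        obtain ⟨q, hq1, hq2⟩ := exists_rat_btwn he₁lt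
        obtain ⟨q', hq'1, hq'2⟩ := exists_rat_btwn he₂lt
        refine Or.inr (Set.mem_iUnion.mpr ⟨(q, q'), hxΩ, le_of_lt hq2, hq'1,
          ⟨e₁, he₁, le_of_lt hq1⟩, ⟨e₂, he₂, le_of_lt hq'2⟩⟩)
      · push_neg at h2
        exact Or.inl (Or.inr ⟨hxΩ, hxE, h2⟩)
    · push_neg at h1
      exact Or.inl (Or.inl ⟨hxΩ, hxE, fun e he => le_of_not_gt fun hlt => absurd hlt (by
        exact not_lt.mpr (h1 e he))⟩)
  refine measure_mono_null hcov ?_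
  refine measure_union_null (measure_union_null hAnull hBnull) (measure_iUnion_null hCnull)
end

section
/- Let d ≥ 1, 0 < m ≤ d, and σ(x) = |x|^m on Ω = ℝ^d. Then a_σ(s) = K_d s^{d/m} for s ≥ 0, its inverse is b_σ(s) = K_d^{−m/d} s^{m/d}, B_σ(s) = (d/(m+d)) K_d^{−m/d} s^{1+m/d}, and H_σ(μ) = (m/d) K_d^{−m/d} μ^{m/d − 1} for every μ > 0. Moreover, for every nonnegative f ∈ L¹(ℝ^d) ∩ L^∞(ℝ^d): ∫₀^{+∞} dt / H_σ(μ_f(t)) ≤ (d/m) K_d^{m/d} ‖f‖_{L^∞}^{m/d} ‖f‖_{L¹}^{1−m/d}. -/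
open MeasureTheory Set Filter Metric
open scoped ENNReal NNReal

/-- The volume `K_d` of the unit ball of `ℝ^d`. -/
noncomputable def unitBallVol (d : ℕ) : ℝ :=
  (volume (Metric.ball (0 : EuclideanSpace ℝ (Fin d)) 1)).toReal

section Aux

variable {d : ℕ} {m : ℝ}
set_option linter.unusedVariables false

local notation "E" => EuclideanSpace ℝ (Fin d)
local notation "K" => unitBallVol d

lemma nonempty_fin (hd : 1 ≤ d) : Nonempty (Fin d) := ⟨⟨0, hd⟩⟩

lemma K_pos (hd : 1 ≤ d) : 0 < K := by
  haveI := nonempty_fin hd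
  refine ENNReal.toReal_pos ?_ (measure_ball_lt_top).ne
  exact (measure_ball_pos volume _ one_pos).ne'

lemma volume_ball_eq (hd : 1 ≤ d) {r : ℝ} (hr : 0 ≤ r) :
    volume (Metric.ball (0 : E) r) = ENNReal.ofReal (K * r ^ (d:ℝ)) := by
  haveI := nonempty_fin hd
  haveI : Nontrivial E := inferInstance
  rw [MeasureTheory.Measure.addHaar_ball _ _ hr, finrank_euclideanSpace_fin]
  rw [show volume (Metric.ball (0 : E) 1) = ENNReal.ofReal K from
    (ENNReal.ofReal_toReal measure_ball_lt_top.ne).symm]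
  rw [← ENNReal.ofReal_mul (by positivity), Real.rpow_natCast, mul_comm]

lemma dm_pos (hm0 : 0 < m) (hmd : m ≤ (d : ℝ)) : (0:ℝ) < (d:ℝ) / m := by
  have : (0:ℝ) < (d:ℝ) := lt_of_lt_of_le hm0 hmd
  positivity

/-- Part 1 : aSig formula. -/
lemma aSig_eq (hd : 1 ≤ d) (hm0 : 0 < m) (hmd : m ≤ (d : ℝ)) (s : ℝ) (hs : 0 ≤ s) :
    aSig Set.univ (fun x : E => ‖x‖ ^ m) (s : EReal)
      = ENNReal.ofReal (K * s ^ ((d : ℝ) / m)) := by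
  have hd' : (0:ℝ) < (d:ℝ) := lt_of_lt_of_le hm0 hmd
  have hset : {x : E | x ∈ Set.univ ∧ ((‖x‖ ^ m : ℝ) : EReal) < (s : EReal)}
      = {x : E | ‖x‖ ^ m < s} := by
    ext x; simp [EReal.coe_lt_coe_iff]
  rcases eq_or_lt_of_le hs with rfl | hs'
  · rw [aSig, hset]
    have : {x : E | ‖x‖ ^ m < (0:ℝ)} = ∅ := by
      ext x; simp [not_lt.2 (Real.rpow_nonneg (norm_nonneg x) m)]
    rw [this, measure_empty, Real.zero_rpow (ne_of_gt (dm_pos hm0 hmd)), mul_zero,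
      ENNReal.ofReal_zero]
  · have hball : {x : E | ‖x‖ ^ m < s} = Metric.ball (0 : E) (s ^ m⁻¹) := by
      ext x
      simp only [mem_setOf_eq, mem_ball, dist_zero_right]
      rw [← Real.lt_rpow_inv_iff_of_pos (norm_nonneg x) hs'.le hm0]
    rw [aSig, hset, hball, volume_ball_eq hd (Real.rpow_nonneg hs'.le _)]
    congr 2
    rw [← Real.rpow_mul hs'.le]
    congr 1
    field_simp

lemma volume_univ_top (hd : 1 ≤ d) : (volume : Measure E) Set.univ = ⊤ := by
  haveI := nonempty_fin hd
  haveI : Nontrivial E := inferInstance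
  exact MeasureTheory.measure_univ_of_isAddLeftInvariant volume

lemma aSig_mono {e e' : EReal} (h : e ≤ e') :
    aSig Set.univ (fun x : E => ‖x‖ ^ m) e ≤ aSig Set.univ (fun x : E => ‖x‖ ^ m) e' :=
  measure_mono (fun x hx => ⟨hx.1, lt_of_lt_of_le hx.2 h⟩)

lemma aSig_lt_top (hd : 1 ≤ d) (hm0 : 0 < m) (hmd : m ≤ (d : ℝ)) (e : ℝ) :
    aSig Set.univ (fun x : E => ‖x‖ ^ m) (e : EReal) < ⊤ := by
  refine lt_of_le_of_lt (aSig_mono (e' := ((max e 0 : ℝ) : EReal)) ?_) ?_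
  · exact EReal.coe_le_coe_iff.2 (le_max_left _ _)
  · rw [aSig_eq hd hm0 hmd _ (le_max_right _ _)]
    exact ENNReal.ofReal_lt_top

/-- eMax = ⊤. -/
lemma eMax_top (hd : 1 ≤ d) (hm0 : 0 < m) (hmd : m ≤ (d : ℝ)) : eMax Set.univ (fun x : E => ‖x‖ ^ m) = ⊤ := by
  rw [eMax, sSup_eq_top]
  intro b hb
  obtain ⟨y, hy1, hy2⟩ := EReal.exists_between_coe_real hb
  exact ⟨(y : EReal), by
    show aSig Set.univ (fun x : EuclideanSpace ℝ (Fin d) => ‖x‖ ^ m) _ < _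
    rw [volume_univ_top hd]
    exact aSig_lt_top hd hm0 hmd y, hy1⟩

end Aux

section Aux2
variable {d : ℕ} {m : ℝ}
set_option linter.unusedVariables false

local notation "E" => EuclideanSpace ℝ (Fin d)
local notation "K" => unitBallVol d

lemma aSig_bot (Ω : Set E) (σ : E → ℝ) : aSig Ω σ ⊥ = 0 := by
  have : {x : E | x ∈ Ω ∧ (σ x : EReal) < ⊥} = ∅ := by
    ext x; simp
  simp [aSig, this]

lemma aSig_nonpos (hd : 1 ≤ d) (hm0 : 0 < m) (hmd : m ≤ (d : ℝ)) {t : ℝ} (ht : t ≤ 0) :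
    aSig Set.univ (fun x : E => ‖x‖ ^ m) (t : EReal) = 0 := by
  refine le_antisymm ?_ zero_le
  have h0 := aSig_eq hd hm0 hmd 0 le_rfl
  rw [Real.zero_rpow (ne_of_gt (dm_pos hm0 hmd)), mul_zero, ENNReal.ofReal_zero] at h0
  exact h0 ▸ aSig_mono (EReal.coe_le_coe_iff.2 ht)

/-- Part 2 : bSig formula. -/
lemma bSig_eq (hd : 1 ≤ d) (hm0 : 0 < m) (hmd : m ≤ (d : ℝ)) (s : ℝ) (hs : 0 ≤ s) :
    bSig Set.univ (fun x : E => ‖x‖ ^ m) (ENNReal.ofReal s)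
      = ((K ^ (-(m / (d : ℝ))) * s ^ (m / (d : ℝ)) : ℝ) : EReal) := by
  have hK := K_pos hd
  have hd' : (0:ℝ) < (d:ℝ) := lt_of_lt_of_le hm0 hmd
  set c : ℝ := K ^ (-(m / (d : ℝ))) * s ^ (m / (d : ℝ)) with hc
  have hc0 : 0 ≤ c := by positivity
  have hcs : c = (s / K) ^ (m / (d:ℝ)) := by
    rw [hc, Real.div_rpow hs hK.le, Real.rpow_neg hK.le]; ring
  have hsetS : {t : EReal | t < eMax Set.univ (fun x : E => ‖x‖ ^ m)
      ∧ aSig Set.univ (fun x : E => ‖x‖ ^ m) t ≤ ENNReal.ofReal s} = Iic ((c : ℝ) : EReal) := by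
    rw [eMax_top hd hm0 hmd]
    ext t
    induction t using EReal.rec with
    | bot => simp [aSig_bot]
    | top => simp
    | coe t =>
      simp only [mem_setOf_eq, mem_Iic, EReal.coe_lt_top, true_and, EReal.coe_le_coe_iff]
      by_cases ht : t ≤ 0
      · simp [aSig_nonpos hd hm0 hmd ht, ht.trans hc0]
      · push_neg at ht
        rw [aSig_eq hd hm0 hmd t ht.le, ENNReal.ofReal_le_ofReal_iff hs]
        rw [mul_comm, ← le_div_iff₀ hK, hcs,
          ← Real.le_rpow_inv_iff_of_pos ht.le (div_nonneg hs hK.le) (dm_pos hm0 hmd),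
          inv_div]
  rw [bSig, hsetS, csSup_Iic]

end Aux2


section Aux3
variable {d : ℕ} {m : ℝ}
set_option linter.unusedVariables false
local notation "E" => EuclideanSpace ℝ (Fin d)


/-- integral of ‖x‖^m over a ball. -/
lemma integral_norm_rpow_ball (hd : 1 ≤ d) (hm0 : 0 < m) {R : ℝ} (hR : 0 < R) :
    ∫ x in Metric.ball (0 : E) R, ‖x‖ ^ m
      = (d : ℝ) * (volume (Metric.ball (0 : E) 1)).toReal * (R ^ ((d : ℝ) + m) / ((d : ℝ) + m)) := by
  haveI : Nonempty (Fin d) := ⟨⟨0, hd⟩⟩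
  haveI : Nontrivial E := inferInstance
  have hd' : (0:ℝ) < (d:ℝ) := by exact_mod_cast hd
  set f : ℝ → ℝ := (Set.indicator (Iio R) (fun y => y ^ m)) with hf
  have h1 : ∫ x in Metric.ball (0 : E) R, ‖x‖ ^ m = ∫ x : E, f ‖x‖ := by
    rw [← integral_indicator measurableSet_ball]
    congr 1
    ext x
    simp only [hf, Set.indicator, mem_ball, dist_zero_right, mem_Iio]
  rw [h1, MeasureTheory.integral_fun_norm_addHaar volume f, finrank_euclideanSpace_fin]
  have h2 : ∫ y in Ioi (0:ℝ), y ^ (d - 1) • f y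
      = ∫ y in Ioo (0:ℝ) R, y ^ ((d:ℝ) - 1 + m) := by
    have : ∀ y : ℝ, y ^ (d-1) • f y = Set.indicator (Iio R) (fun y => y ^ (d-1) * y ^ m) y := by
      intro y
      simp only [hf, Set.indicator, smul_eq_mul]
      split <;> simp
    simp_rw [this]
    rw [integral_indicator measurableSet_Iio, Measure.restrict_restrict measurableSet_Iio,
      Set.Iio_inter_Ioi]
    refine setIntegral_congr_fun measurableSet_Ioo (fun y hy => ?_)
    rw [← Real.rpow_natCast y (d-1), ← Real.rpow_add hy.1, Nat.cast_sub hd, Nat.cast_one]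
  rw [h2]
  have h3 : ∫ y in Ioo (0:ℝ) R, y ^ ((d:ℝ) - 1 + m) = R ^ ((d:ℝ) + m) / ((d:ℝ) + m) := by
    rw [← integral_Ioc_eq_integral_Ioo, ← intervalIntegral.integral_of_le hR.le,
      integral_rpow (Or.inl (by linarith))]
    rw [Real.zero_rpow (ne_of_gt (by linarith : (0:ℝ) < (d:ℝ)-1+m+1)), sub_zero]
    ring_nf
  rw [h3, nsmul_eq_mul, smul_eq_mul]
  rw [measureReal_def]; ring

end Aux3


section Conv

lemma pos_of_deriv2 {b : ℝ} (hb : 0 < b) (F F' F'' : ℝ → ℝ)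
    (hFc : ContinuousOn F (Icc 0 b)) (hF'c : ContinuousOn F' (Icc 0 b))
    (hF : ∀ s ∈ Ioo 0 b, HasDerivAt F (F' s) s)
    (hF' : ∀ s ∈ Ioo 0 b, HasDerivAt F' (F'' s) s)
    (hF0 : F 0 = 0) (hF'0 : F' 0 = 0) (hF''pos : ∀ s ∈ Ioo 0 b, 0 ≤ F'' s) :
    ∀ s ∈ Icc 0 b, 0 ≤ F s := by
  have hint : interior (Icc (0:ℝ) b) = Ioo 0 b := interior_Icc
  have mono' : MonotoneOn F' (Icc 0 b) := by
    refine monotoneOn_of_deriv_nonneg (convex_Icc 0 b) hF'c ?_ ?_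
    · rw [hint]; exact fun s hs => (hF' s hs).differentiableAt.differentiableWithinAt
    · rw [hint]; intro s hs; rw [(hF' s hs).deriv]; exact hF''pos s hs
  have hF'nonneg : ∀ s ∈ Icc (0:ℝ) b, 0 ≤ F' s := by
    intro s hs
    have := mono' ⟨le_rfl, hb.le⟩ hs hs.1
    rwa [hF'0] at this
  have mono : MonotoneOn F (Icc 0 b) := by
    refine monotoneOn_of_deriv_nonneg (convex_Icc 0 b) hFc ?_ ?_
    · rw [hint]; exact fun s hs => (hF s hs).differentiableAt.differentiableWithinAt
    · rw [hint]; intro s hs; rw [(hF s hs).deriv]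
      exact hF'nonneg s ⟨hs.1.le, hs.2.le⟩
  intro s hs
  have := mono ⟨le_rfl, hb.le⟩ hs hs.1
  rwa [hF0] at this

variable {p : ℝ}

lemma hasDerivAt_add_rpow {μ : ℝ} (hp : 0 < p) {s : ℝ} (h : 0 < μ + s) :
    HasDerivAt (fun s : ℝ => (μ + s) ^ p) (p * (μ + s) ^ (p - 1)) s := by
  have h1 : HasDerivAt (fun s : ℝ => μ + s) 1 s := (hasDerivAt_id s).const_add μ
  have h2 := (Real.hasDerivAt_rpow_const (x := μ + s) (p := p) (Or.inl h.ne')).comp s h1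
  simpa [Function.comp_def] using h2

lemma hasDerivAt_sub_rpow {μ : ℝ} (hp : 0 < p) {s : ℝ} (h : 0 < μ - s) :
    HasDerivAt (fun s : ℝ => (μ - s) ^ p) (-(p * (μ - s) ^ (p - 1))) s := by
  have h1 : HasDerivAt (fun s : ℝ => μ - s) (-1) s := (hasDerivAt_id s).const_sub μ
  have h2 := (Real.hasDerivAt_rpow_const (x := μ - s) (p := p) (Or.inl h.ne')).comp s h1
  simpa [Function.comp_def] using h2

lemma contOn_add_rpow {μ b : ℝ} (hp : 0 < p) (hμ : 0 < μ) :
    ContinuousOn (fun s : ℝ => (μ + s) ^ p) (Icc 0 b) := by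
  intro s hs
  refine ContinuousAt.continuousWithinAt ?_
  have h1 : ContinuousAt (fun s : ℝ => μ + s) s := by fun_prop
  have h2 : ContinuousAt (fun y : ℝ => y ^ p) (μ + s) :=
    Real.continuousAt_rpow_const _ _ (Or.inr hp.le)
  exact h2.comp h1

lemma contOn_sub_rpow {μ b : ℝ} (hp : 0 < p) (hμ : 0 < μ) :
    ContinuousOn (fun s : ℝ => (μ - s) ^ p) (Icc 0 b) := by
  intro s hs
  refine ContinuousAt.continuousWithinAt ?_
  have h1 : ContinuousAt (fun s : ℝ => μ - s) s := by fun_prop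
  have h2 : ContinuousAt (fun y : ℝ => y ^ p) (μ - s) :=
    Real.continuousAt_rpow_const _ _ (Or.inr hp.le)
  exact h2.comp h1

/-- Generic bound: if `2*A ⋚ p(p-1)((μ+u)^{p-2}+(μ-u)^{p-2})` on `(0,b)` then
`A s² ⋚ (μ+s)^p + (μ-s)^p - 2μ^p` on `[0,b]`.  Lower-bound version. -/
lemma lower_aux (hp1 : 1 < p) {μ b A : ℝ} (hμ : 0 < μ) (hb0 : 0 < b) (hbμ : b ≤ μ)
    (hA : ∀ u : ℝ, 0 < u → u < b →
      2 * A ≤ p * (p - 1) * ((μ + u) ^ (p - 2) + (μ - u) ^ (p - 2))) :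
    ∀ s : ℝ, 0 ≤ s → s ≤ b → A * s ^ 2 ≤ (μ + s) ^ p + (μ - s) ^ p - 2 * μ ^ p := by
  have hp0 : 0 < p := by linarith
  have hp10 : 0 < p - 1 := by linarith
  set F : ℝ → ℝ := fun s => (μ + s) ^ p + (μ - s) ^ p - 2 * μ ^ p - A * s ^ 2 with hF
  set F' : ℝ → ℝ := fun s => p * (μ + s) ^ (p-1) - p * (μ - s) ^ (p-1) - 2 * A * s with hF'
  set F'' : ℝ → ℝ := fun s =>
    p * (p-1) * ((μ + s) ^ (p-2) + (μ - s) ^ (p-2)) - 2 * A with hF''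
  have key : ∀ s ∈ Icc 0 b, 0 ≤ F s := by
    refine pos_of_deriv2 hb0 F F' F'' ?_ ?_ ?_ ?_ ?_ ?_ ?_
    · exact ((contOn_add_rpow hp0 hμ).add (contOn_sub_rpow hp0 hμ)).sub
        (continuousOn_const) |>.sub (continuousOn_const.mul (continuous_pow 2).continuousOn)
    · exact ((continuousOn_const.mul (contOn_add_rpow hp10 hμ)).sub
        (continuousOn_const.mul (contOn_sub_rpow hp10 hμ))).sub
        ((continuousOn_const.mul continuous_id.continuousOn))
    · intro s hs
      have h1 : 0 < μ + s := by nlinarith [hs.1, hs.2]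
      have h2 : 0 < μ - s := by nlinarith [hs.2]
      have := ((hasDerivAt_add_rpow hp0 h1).add (hasDerivAt_sub_rpow hp0 h2)).sub
        (((hasDerivAt_pow 2 s).const_mul A).const_add (2 * μ ^ p))
      -- F = (μ+s)^p + (μ-s)^p - (2μ^p + A s²)
      have heq : F = fun s => ((μ + s) ^ p + (μ - s) ^ p) - (2 * μ ^ p + A * s ^ 2) := by
        funext t; simp [hF]; ring
      rw [heq]
      have hd := ((hasDerivAt_add_rpow hp0 h1).add (hasDerivAt_sub_rpow hp0 h2)).sub
        (((hasDerivAt_pow 2 s).const_mul A).const_add (2 * μ ^ p))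
      refine hd.congr_deriv ?_
      simp [hF']
      ring
    · intro s hs
      have h1 : 0 < μ + s := by nlinarith [hs.1, hs.2]
      have h2 : 0 < μ - s := by nlinarith [hs.2]
      have hd := (((hasDerivAt_add_rpow hp10 h1).const_mul p).sub
        ((hasDerivAt_sub_rpow hp10 h2).const_mul p)).sub ((hasDerivAt_id s).const_mul (2*A))
      have heq : F' = fun t => p * (μ + t) ^ (p-1) - p * (μ - t) ^ (p-1) - 2 * A * id t := by
        funext t; simp [hF']
      rw [heq]
      refine hd.congr_deriv ?_
      rw [show p - 1 - 1 = p - 2 from by ring]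
      simp only [hF'']; ring
    · show (μ + 0) ^ p + (μ - 0) ^ p - 2 * μ ^ p - A * 0 ^ 2 = 0
      norm_num; ring
    · show p * (μ + 0) ^ (p-1) - p * (μ - 0) ^ (p-1) - 2 * A * 0 = 0
      norm_num
    · intro s hs
      have h := hA s hs.1 hs.2
      simp only [hF'']
      linarith
  intro s hs0 hsb
  have := key s ⟨hs0, hsb⟩
  simp only [hF] at this
  linarith

end Conv

section Conv2
variable {p : ℝ}

/-- Upper-bound version. -/
lemma upper_aux (hp1 : 1 < p) {μ b A : ℝ} (hμ : 0 < μ) (hb0 : 0 < b) (hbμ : b ≤ μ)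
    (hA : ∀ u : ℝ, 0 < u → u < b →
      p * (p - 1) * ((μ + u) ^ (p - 2) + (μ - u) ^ (p - 2)) ≤ 2 * A) :
    ∀ s : ℝ, 0 ≤ s → s ≤ b → (μ + s) ^ p + (μ - s) ^ p - 2 * μ ^ p ≤ A * s ^ 2 := by
  have hp0 : 0 < p := by linarith
  have hp10 : 0 < p - 1 := by linarith
  set F : ℝ → ℝ := fun s => A * s ^ 2 - ((μ + s) ^ p + (μ - s) ^ p - 2 * μ ^ p) with hF
  set F' : ℝ → ℝ := fun s => 2 * A * s - (p * (μ + s) ^ (p-1) - p * (μ - s) ^ (p-1)) with hF'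
  set F'' : ℝ → ℝ := fun s =>
    2 * A - p * (p-1) * ((μ + s) ^ (p-2) + (μ - s) ^ (p-2)) with hF''
  have key : ∀ s ∈ Icc 0 b, 0 ≤ F s := by
    refine pos_of_deriv2 hb0 F F' F'' ?_ ?_ ?_ ?_ ?_ ?_ ?_
    · exact (continuousOn_const.mul (continuous_pow 2).continuousOn).sub
        (((contOn_add_rpow hp0 hμ).add (contOn_sub_rpow hp0 hμ)).sub continuousOn_const)
    · exact (continuousOn_const.mul continuous_id.continuousOn).sub
        ((continuousOn_const.mul (contOn_add_rpow hp10 hμ)).sub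
          (continuousOn_const.mul (contOn_sub_rpow hp10 hμ)))
    · intro s hs
      have h1 : 0 < μ + s := by nlinarith [hs.1, hs.2]
      have h2 : 0 < μ - s := by nlinarith [hs.2]
      have hd := (((hasDerivAt_pow 2 s).const_mul A)).sub
        (((hasDerivAt_add_rpow hp0 h1).add (hasDerivAt_sub_rpow hp0 h2)).sub
          (hasDerivAt_const s (2 * μ ^ p)))
      refine hd.congr_deriv ?_
      simp only [hF']; push_cast; ring
    · intro s hs
      have h1 : 0 < μ + s := by nlinarith [hs.1, hs.2]
      have h2 : 0 < μ - s := by nlinarith [hs.2]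
      have hd := (((hasDerivAt_id s).const_mul (2*A))).sub
        (((hasDerivAt_add_rpow hp10 h1).const_mul p).sub
          ((hasDerivAt_sub_rpow hp10 h2).const_mul p))
      have heq : F' = fun t => 2 * A * id t - (p * (μ + t) ^ (p-1) - p * (μ - t) ^ (p-1)) := by
        funext t; simp [hF']
      rw [heq]
      refine hd.congr_deriv ?_
      rw [show p - 1 - 1 = p - 2 from by ring]
      simp only [hF'']; ring
    · show A * 0 ^ 2 - ((μ + 0) ^ p + (μ - 0) ^ p - 2 * μ ^ p) = 0
      norm_num; ring
    · show 2 * A * 0 - (p * (μ + 0) ^ (p-1) - p * (μ - 0) ^ (p-1)) = 0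
      norm_num
    · intro s hs
      have h := hA s hs.1 hs.2
      simp only [hF'']
      linarith
  intro s hs0 hsb
  have := key s ⟨hs0, hsb⟩
  simp only [hF] at this
  linarith

/-- AM–GM convexity inequality for the negative-exponent power. -/
lemma rpow_add_sub_ge (hp2 : p ≤ 2) {μ u : ℝ} (hμ : 0 < μ) (hu0 : 0 < u) (huμ : u < μ) :
    2 * μ ^ (p - 2) ≤ (μ + u) ^ (p - 2) + (μ - u) ^ (p - 2) := by
  have h1 : 0 < μ + u := by linarith
  have h2 : 0 < μ - u := by linarith
  have ha : 0 < (μ + u) ^ (p - 2) := Real.rpow_pos_of_pos h1 _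
  have hc : 0 < (μ - u) ^ (p - 2) := Real.rpow_pos_of_pos h2 _
  have hM : 0 < μ ^ (p - 2) := Real.rpow_pos_of_pos hμ _
  have hprod : μ ^ (p - 2) * μ ^ (p - 2) ≤ (μ + u) ^ (p - 2) * (μ - u) ^ (p - 2) := by
    rw [← Real.mul_rpow h1.le h2.le, ← Real.mul_rpow hμ.le hμ.le]
    refine Real.rpow_le_rpow_of_nonpos (by nlinarith) (by nlinarith) (by linarith)
  have hsq := Real.sq_sqrt ha.le
  have hsq2 := Real.sq_sqrt hc.le
  have hmul : Real.sqrt ((μ + u) ^ (p - 2)) * Real.sqrt ((μ - u) ^ (p - 2))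
      = Real.sqrt ((μ + u) ^ (p - 2) * (μ - u) ^ (p - 2)) :=
    (Real.sqrt_mul ha.le _).symm
  have hge : μ ^ (p - 2) ≤ Real.sqrt ((μ + u) ^ (p - 2) * (μ - u) ^ (p - 2)) := by
    have := Real.sqrt_le_sqrt hprod
    rwa [show μ ^ (p-2) * μ ^ (p-2) = (μ ^ (p-2))^2 from by ring, Real.sqrt_sq hM.le] at this
  nlinarith [sq_nonneg (Real.sqrt ((μ + u) ^ (p - 2)) - Real.sqrt ((μ - u) ^ (p - 2)))]

/-- Monotone bound for the negative-exponent power. -/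
lemma rpow_add_sub_le (hp2 : p ≤ 2) {μ u b : ℝ} (hu0 : 0 < u) (hub : u < b) (hbμ : b < μ) :
    (μ + u) ^ (p - 2) + (μ - u) ^ (p - 2) ≤ 2 * (μ - b) ^ (p - 2) := by
  have hb2 : 0 < μ - b := by linarith
  have e1 : (μ + u) ^ (p - 2) ≤ (μ - b) ^ (p - 2) :=
    Real.rpow_le_rpow_of_nonpos hb2 (by linarith) (by linarith)
  have e2 : (μ - u) ^ (p - 2) ≤ (μ - b) ^ (p - 2) :=
    Real.rpow_le_rpow_of_nonpos hb2 (by linarith) (by linarith)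
  linarith

end Conv2


section Main
variable {d : ℕ} {m : ℝ}
set_option linter.unusedVariables false
set_option maxHeartbeats 1000000

local notation "E" => EuclideanSpace ℝ (Fin d)
local notation "K" => unitBallVol d

lemma aSig_sigma (hd : 1 ≤ d) (hm0 : 0 < m) (hmd : m ≤ (d : ℝ)) (x : E) :
    aSig Set.univ (fun x : E => ‖x‖ ^ m) ((‖x‖ ^ m : ℝ) : EReal)
      = ENNReal.ofReal (K * ‖x‖ ^ (d : ℝ)) := by
  rw [aSig_eq hd hm0 hmd _ (Real.rpow_nonneg (norm_nonneg x) m)]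
  congr 2
  rw [← Real.rpow_mul (norm_nonneg x)]
  congr 1
  field_simp

/-- Part 3 : BSig formula. -/
lemma BSig_eq (hd : 1 ≤ d) (hm0 : 0 < m) (hmd : m ≤ (d : ℝ)) (s : ℝ) (hs : 0 ≤ s) :
    BSig Set.univ (fun x : E => ‖x‖ ^ m) s
      = ((d : ℝ) / (m + d)) * K ^ (-(m / (d : ℝ))) * s ^ (1 + m / (d : ℝ)) := by
  have hK := K_pos (d := d) hd
  have hd' : (0:ℝ) < (d:ℝ) := lt_of_lt_of_le hm0 hmd
  have hp : (0:ℝ) < 1 + m / d := by positivity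
  rcases eq_or_lt_of_le hs with rfl | hs'
  · have : {x : E | x ∈ Set.univ
        ∧ aSig Set.univ (fun x : E => ‖x‖ ^ m) ((‖x‖ ^ m : ℝ) : EReal)
          < ENNReal.ofReal 0} = ∅ := by
      ext x; simp
    rw [BSig, this]
    simp [Real.zero_rpow hp.ne']
  · set R : ℝ := (s / K) ^ ((d:ℝ)⁻¹) with hR
    have hRpos : 0 < R := Real.rpow_pos_of_pos (div_pos hs' hK) _
    have hset : {x : E | x ∈ Set.univ
        ∧ aSig Set.univ (fun x : E => ‖x‖ ^ m) ((‖x‖ ^ m : ℝ) : EReal)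
          < ENNReal.ofReal s} = Metric.ball (0 : E) R := by
      ext x
      simp only [mem_setOf_eq, mem_univ, true_and, aSig_sigma hd hm0 hmd x, mem_ball,
        dist_zero_right]
      rw [ENNReal.ofReal_lt_ofReal_iff hs', hR, mul_comm, ← lt_div_iff₀ hK,
        Real.lt_rpow_inv_iff_of_pos (norm_nonneg x) (div_nonneg hs'.le hK.le) hd']
    rw [BSig, hset, integral_norm_rpow_ball hd hm0 hRpos]
    have hRpow : R ^ ((d:ℝ) + m) = s ^ (1 + m / (d:ℝ)) * (K ^ (1 + m / (d:ℝ)))⁻¹ := by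
      rw [hR, ← Real.rpow_mul (div_nonneg hs'.le hK.le),
        show ((d:ℝ)⁻¹ * ((d:ℝ) + m)) = 1 + m / (d:ℝ) by field_simp,
        Real.div_rpow hs'.le hK.le, div_eq_mul_inv]
    rw [hRpow]
    have hKpow : K ^ (-(m / (d:ℝ))) = K / K ^ (1 + m / (d:ℝ)) := by
      rw [show -(m/(d:ℝ)) = 1 - (1 + m/(d:ℝ)) by ring, Real.rpow_sub hK, Real.rpow_one]
    rw [hKpow]
    have hKp : 0 < K ^ (1 + m / (d:ℝ)) := Real.rpow_pos_of_pos hK _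
    have : (volume (Metric.ball (0 : E) 1)).toReal = K := rfl
    rw [this]
    field_simp
    ring

lemma HSig_zero (Ω : Set E) (σ : E → ℝ) : HSig Ω σ 0 = 0 := by
  rw [HSig]
  simp [Real.sInf_empty]

/-- Part 4 : HSig formula. -/
lemma HSig_eq (hd : 1 ≤ d) (hm0 : 0 < m) (hmd : m ≤ (d : ℝ)) (μ : ℝ) (hμ : 0 < μ) :
    HSig Set.univ (fun x : E => ‖x‖ ^ m) μ
      = (m / d) * K ^ (-(m / (d : ℝ))) * μ ^ (m / (d : ℝ) - 1) := by
  have hK := K_pos (d := d) hd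
  have hd' : (0:ℝ) < (d:ℝ) := lt_of_lt_of_le hm0 hmd
  set p : ℝ := 1 + m / (d:ℝ) with hp
  have hp1 : 1 < p := by rw [hp]; nlinarith [div_pos hm0 hd']
  have hp2 : p ≤ 2 := by
    rw [hp]
    have : m / (d:ℝ) ≤ 1 := (div_le_one hd').2 hmd
    linarith
  set c : ℝ := ((d : ℝ) / (m + d)) * K ^ (-(m / (d : ℝ))) with hc
  have hc0 : 0 < c := by
    have := Real.rpow_pos_of_pos hK (-(m / (d : ℝ)))
    have hmd' : (0:ℝ) < m + d := by linarith
    positivity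
  set L : ℝ := (m / d) * K ^ (-(m / (d : ℝ))) * μ ^ (m / (d : ℝ) - 1) with hL
  have hLc : L = c * (p * (p - 1) * μ ^ (p - 2)) := by
    rw [hL, hc, hp]
    rw [show (1 + m / (d:ℝ)) - 2 = m / (d:ℝ) - 1 by ring]
    have hmd' : (0:ℝ) ≠ m + d := by intro h; linarith
    field_simp
    ring
  set g : ℝ → ℝ := fun s =>
    (BSig Set.univ (fun x : E => ‖x‖ ^ m) (μ + s) + BSig Set.univ (fun x : E => ‖x‖ ^ m) (μ - s)
      - 2 * BSig Set.univ (fun x : E => ‖x‖ ^ m) μ) / s ^ 2 with hg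
  have hgval : ∀ s, 0 < s → s ≤ μ →
      g s = c * ((μ + s) ^ p + (μ - s) ^ p - 2 * μ ^ p) / s ^ 2 := by
    intro s h0 h1
    rw [hg]
    simp only
    rw [BSig_eq hd hm0 hmd (μ + s) (by linarith), BSig_eq hd hm0 hmd (μ - s) (by linarith),
      BSig_eq hd hm0 hmd μ hμ.le]
    rw [← hp, ← hc]
    ring_nf
  -- lower bound for every element of the image
  have hlb : ∀ y ∈ g '' Ioc 0 μ, L ≤ y := by
    rintro y ⟨s, hs, rfl⟩
    rw [hgval s hs.1 hs.2]
    have hlow := lower_aux hp1 (μ := μ) (b := μ) (A := p * (p-1) * μ ^ (p-2)) hμ hμ le_rfl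
      (fun u hu0 hub => by
        have h2 := rpow_add_sub_ge hp2 hμ hu0 hub
        have hpp : (0:ℝ) ≤ p * (p - 1) := by nlinarith
        nlinarith [mul_le_mul_of_nonneg_left h2 hpp]) s hs.1.le hs.2
    have hs2 : (0:ℝ) < s ^ 2 := pow_pos hs.1 2
    rw [hLc, le_div_iff₀ hs2]
    calc c * (p * (p - 1) * μ ^ (p - 2)) * s ^ 2
        = c * (p * (p - 1) * μ ^ (p - 2) * s ^ 2) := by ring
      _ ≤ c * ((μ + s) ^ p + (μ - s) ^ p - 2 * μ ^ p) := by
          exact mul_le_mul_of_nonneg_left hlow hc0.le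
  refine le_antisymm ?_ (le_csInf ⟨g μ, ⟨μ, ⟨hμ, le_rfl⟩, rfl⟩⟩ hlb)
  -- upper bound : sInf ≤ L
  refine le_of_forall_pos_le_add fun ε hε => ?_
  have hcont : ContinuousAt (fun s : ℝ => c * (p * (p - 1) * (μ - s) ^ (p - 2))) 0 := by
    have h1 : ContinuousAt (fun s : ℝ => μ - s) 0 := by fun_prop
    have h2 : ContinuousAt (fun y : ℝ => y ^ (p - 2)) (μ - 0) := by
      rw [sub_zero]
      exact Real.continuousAt_rpow_const _ _ (Or.inl hμ.ne')
    exact (continuousAt_const.mul ((continuousAt_const.mul (h2.comp h1))))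
  have htend : Tendsto (fun s : ℝ => c * (p * (p - 1) * (μ - s) ^ (p - 2))) (nhdsWithin 0 (Ioi 0))
      (nhds (c * (p * (p - 1) * μ ^ (p - 2)))) := by
    have h := hcont.tendsto
    norm_num at h
    exact tendsto_nhdsWithin_of_tendsto_nhds h
  have hev : ∀ᶠ s in nhdsWithin 0 (Ioi 0),
      c * (p * (p - 1) * (μ - s) ^ (p - 2)) < L + ε := by
    refine htend.eventually_lt_const ?_
    rw [← hLc]; linarith
  have hev2 : ∀ᶠ s in nhdsWithin 0 (Ioi 0), s ∈ Ioo (0:ℝ) μ :=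
    Ioo_mem_nhdsGT_of_mem ⟨le_rfl, hμ⟩
  obtain ⟨s, hs1, hs2⟩ := (hev.and hev2).exists
  have hsIoc : s ∈ Ioc 0 μ := ⟨hs2.1, hs2.2.le⟩
  refine le_trans (csInf_le ⟨L, hlb⟩ ⟨s, hsIoc, rfl⟩) ?_
  show g s ≤ L + ε
  rw [hgval s hs2.1 hs2.2.le]
  have hupp := upper_aux hp1 (μ := μ) (b := s) (A := p * (p-1) * (μ - s) ^ (p-2)) hμ hs2.1 hs2.2.le
    (fun u hu0 hub => by
      have h2 := rpow_add_sub_le hp2 hu0 hub hs2.2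
      have hpp : (0:ℝ) ≤ p * (p - 1) := by nlinarith
      nlinarith [mul_le_mul_of_nonneg_left h2 hpp]) s hs2.1.le le_rfl
  have hs2' : (0:ℝ) < s ^ 2 := pow_pos hs2.1 2
  rw [div_le_iff₀ hs2']
  calc c * ((μ + s) ^ p + (μ - s) ^ p - 2 * μ ^ p)
      ≤ c * (p * (p - 1) * (μ - s) ^ (p - 2) * s ^ 2) := mul_le_mul_of_nonneg_left hupp hc0.le
    _ = c * (p * (p - 1) * (μ - s) ^ (p - 2)) * s ^ 2 := by ring
    _ ≤ (L + ε) * s ^ 2 := by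
        exact mul_le_mul_of_nonneg_right hs1.le (by positivity)

lemma distFun_antitone (f : E → ℝ) : Antitone (fun t => distFun Set.univ f t) := by
  intro t t' h
  exact measure_mono (fun x hx => ⟨hx.1, lt_of_le_of_lt h hx.2⟩)

/-- Part 5 : the integral bound. -/
lemma part5 (hd : 1 ≤ d) (hm0 : 0 < m) (hmd : m ≤ (d : ℝ))
    (f : E → ℝ) (hf0 : ∀ x, 0 ≤ f x) (hfi : MeasureTheory.Integrable f)
    (hfb : MeasureTheory.MemLp f ⊤ volume) :
    (∫⁻ t in Ioi (0 : ℝ), ENNReal.ofReal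
        ((HSig Set.univ (fun x : E => ‖x‖ ^ m) ((distFun Set.univ f t).toReal))⁻¹))
      ≤ ENNReal.ofReal ((d / m) * K ^ (m / (d : ℝ))
          * ((MeasureTheory.eLpNorm f ⊤ volume).toReal) ^ (m / (d : ℝ))
          * (∫ x, f x) ^ (1 - m / (d : ℝ))) := by
  have hK := K_pos (d := d) hd
  have hd' : (0:ℝ) < (d:ℝ) := lt_of_lt_of_le hm0 hmd
  set T : ℝ := (MeasureTheory.eLpNorm f ⊤ volume).toReal with hT
  set I : ℝ := ∫ x, f x with hI
  have hI0 : 0 ≤ I := integral_nonneg hf0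
  have hT0 : 0 ≤ T := ENNReal.toReal_nonneg
  have distFun_eq : ∀ t : ℝ, distFun Set.univ f t = volume {x : E | t < f x} := by
    intro t; rw [distFun]; congr 1; ext x; simp
  -- f ≤ T a.e.
  have hfT : ∀ᵐ x : E, f x ≤ T := by
    have h1 : ∀ᵐ x : E, (‖f x‖₊ : ℝ≥0∞) ≤ MeasureTheory.eLpNorm f ⊤ volume := by
      rw [MeasureTheory.eLpNorm_exponent_top]
      exact MeasureTheory.ae_le_eLpNormEssSup
    filter_upwards [h1] with x hx
    calc f x ≤ |f x| := le_abs_self _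
      _ = ((‖f x‖₊ : ℝ≥0∞)).toReal := by simp [Real.norm_eq_abs]
      _ ≤ T := ENNReal.toReal_mono hfb.2.ne hx
  have hdist_zero : ∀ t : ℝ, T ≤ t → distFun Set.univ f t = 0 := by
    intro t ht
    rw [distFun_eq]
    refine measure_mono_null (fun x (hx : t < f x) => ?_) (ae_iff.mp hfT)
    exact not_le.2 (lt_of_le_of_lt ht hx)
  -- the degenerate case
  by_cases hdeg : f =ᵐ[volume] 0
  · have hzero : ∀ t : ℝ, 0 < t → distFun Set.univ f t = 0 := by
      intro t ht
      rw [distFun_eq]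
      refine measure_mono_null (fun x (hx : t < f x) => ?_) (ae_iff.mp hdeg)
      show f x ≠ 0
      intro h; rw [h] at hx; exact absurd hx (not_lt.2 ht.le)
    have : ∀ t ∈ Ioi (0:ℝ), ENNReal.ofReal
        ((HSig Set.univ (fun x : E => ‖x‖ ^ m) ((distFun Set.univ f t).toReal))⁻¹) ≤ 0 := by
      intro t ht
      rw [hzero t ht]
      simp [HSig_zero]
    calc (∫⁻ t in Ioi (0 : ℝ), ENNReal.ofReal
          ((HSig Set.univ (fun x : E => ‖x‖ ^ m) ((distFun Set.univ f t).toReal))⁻¹))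
        ≤ ∫⁻ _ in Ioi (0 : ℝ), 0 := setLIntegral_mono measurable_const this
      _ = 0 := by simp
      _ ≤ _ := zero_le
  -- nondegenerate: T > 0 and I > 0
  have hTpos : 0 < T := by
    rcases hT0.eq_or_lt with h | h
    · exfalso
      apply hdeg
      refine (MeasureTheory.eLpNorm_eq_zero_iff (p := ⊤) hfi.1 (by simp)).mp ?_
      rcases (ENNReal.toReal_eq_zero_iff _).mp h.symm with h' | h'
      · exact h'
      · exact absurd h' hfb.2.ne
    · exact h
  have hIpos : 0 < I := by
    rcases hI0.eq_or_lt with h | h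
    · exact absurd ((MeasureTheory.integral_eq_zero_iff_of_nonneg hf0 hfi).mp h.symm) hdeg
    · exact h
  set θ : ℝ := 1 - m / (d:ℝ) with hθ
  have hθ0 : 0 ≤ θ := by
    rw [hθ]; have : m / (d:ℝ) ≤ 1 := (div_le_one hd').2 hmd; linarith
  have h1θ : 0 < 1 - θ := by rw [hθ]; have := div_pos hm0 hd'; simp; linarith [div_pos hm0 hd']
  set lam : ℝ := I / T with hlam
  have hlampos : 0 < lam := div_pos hIpos hTpos
  set A : ℝ := lam ^ θ with hA
  have hApos : 0 < A := Real.rpow_pos_of_pos hlampos _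
  set c₀ : ℝ := ((d:ℝ) / m) * K ^ (m / (d : ℝ)) with hc₀
  have hc₀pos : 0 < c₀ := by
    have := Real.rpow_pos_of_pos hK (m / (d : ℝ)); positivity
  set C₁ : ℝ := θ * (A / lam) with hC₁
  set C₂ : ℝ := (1 - θ) * A with hC₂
  have hC₁0 : 0 ≤ C₁ := by positivity
  have hC₂0 : 0 ≤ C₂ := by positivity
  -- pointwise bound
  have key : ∀ t ∈ Ioi (0:ℝ), ENNReal.ofReal
      ((HSig Set.univ (fun x : E => ‖x‖ ^ m) ((distFun Set.univ f t).toReal))⁻¹)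
      ≤ (Ioc (0:ℝ) T).indicator (fun t => ENNReal.ofReal c₀ *
          (ENNReal.ofReal C₁ * distFun Set.univ f t + ENNReal.ofReal C₂)) t := by
    intro t ht
    rcases le_or_gt t T with htT | htT
    swap
    · rw [hdist_zero t htT.le]
      rw [Set.indicator_of_notMem (by simp [htT, not_le.2 htT] : t ∉ Ioc (0:ℝ) T)]
      simp [HSig_zero]
    · have hmem : t ∈ Ioc (0:ℝ) T := ⟨ht, htT⟩
      rw [Set.indicator_of_mem hmem]
      set ν : ℝ≥0∞ := distFun Set.univ f t with hν
      by_cases hνtop : ν = ⊤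
      · rw [hνtop]
        simp only [ENNReal.toReal_top, HSig_zero]
        simp
      by_cases hν0 : ν = 0
      · rw [hν0]
        simp only [ENNReal.toReal_zero, HSig_zero]
        simp
      have hνr : 0 < ν.toReal := ENNReal.toReal_pos hν0 hνtop
      rw [HSig_eq hd hm0 hmd _ hνr]
      set w : ℝ := ν.toReal with hw
      have hinv : ((m / (d:ℝ)) * K ^ (-(m / (d:ℝ))) * w ^ (m / (d:ℝ) - 1))⁻¹
          = c₀ * w ^ θ := by
        rw [mul_inv, mul_inv, Real.rpow_neg hK.le, inv_inv,
          show m / (d:ℝ) - 1 = -θ by rw [hθ]; ring, Real.rpow_neg hνr.le, inv_inv,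
          inv_div, hc₀]
      rw [hinv]
      -- real inequality : w ^ θ ≤ C₁ * w + C₂
      have hreal : w ^ θ ≤ C₁ * w + C₂ := by
        have hgm := Real.geom_mean_le_arith_mean2_weighted hθ0 h1θ.le hνr.le hlampos.le
          (by ring : θ + (1 - θ) = 1)
        have e2 : lam ^ (1 - θ) = lam / A := by
          rw [hA, Real.rpow_sub hlampos, Real.rpow_one]
        have hlA : 0 < lam / A := div_pos hlampos hApos
        have h3 : w ^ θ * (lam / A) ≤ θ * w + (1 - θ) * lam := by rw [← e2]; exact hgm
        rw [hC₁, hC₂]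
        calc w ^ θ = (w ^ θ * (lam / A)) * (A / lam) := by field_simp
          _ ≤ (θ * w + (1 - θ) * lam) * (A / lam) := by
              exact mul_le_mul_of_nonneg_right h3 (by positivity)
          _ = θ * (A / lam) * w + (1 - θ) * A := by field_simp
      have hνeq : ν = ENNReal.ofReal w := by rw [hw, ENNReal.ofReal_toReal hνtop]
      rw [hνeq, ← ENNReal.ofReal_mul hC₁0, ← ENNReal.ofReal_add (by positivity) hC₂0,
        ← ENNReal.ofReal_mul hc₀pos.le]
      exact ENNReal.ofReal_le_ofReal (by
        have := mul_le_mul_of_nonneg_left hreal hc₀pos.le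
        linarith)
  -- integrate
  have hmeas : Measurable fun t : ℝ => ENNReal.ofReal c₀ *
      (ENNReal.ofReal C₁ * distFun Set.univ f t + ENNReal.ofReal C₂) := by
    have h1 : Measurable fun t : ℝ => distFun Set.univ f t := (distFun_antitone f).measurable
    fun_prop
  have layer : (∫⁻ t in Ioi (0:ℝ), distFun Set.univ f t) = ENNReal.ofReal I := by
    simp_rw [distFun_eq]
    rw [← MeasureTheory.lintegral_eq_lintegral_meas_lt volume (ae_of_all _ hf0) hfi.aemeasurable]
    exact (MeasureTheory.ofReal_integral_eq_lintegral_ofReal hfi (ae_of_all _ hf0)).symm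
  calc (∫⁻ t in Ioi (0 : ℝ), ENNReal.ofReal
        ((HSig Set.univ (fun x : E => ‖x‖ ^ m) ((distFun Set.univ f t).toReal))⁻¹))
      ≤ ∫⁻ t in Ioi (0:ℝ), (Ioc (0:ℝ) T).indicator (fun t => ENNReal.ofReal c₀ *
          (ENNReal.ofReal C₁ * distFun Set.univ f t + ENNReal.ofReal C₂)) t :=
        setLIntegral_mono (hmeas.indicator measurableSet_Ioc) key
    _ = ∫⁻ t in Ioc (0:ℝ) T, ENNReal.ofReal c₀ *
          (ENNReal.ofReal C₁ * distFun Set.univ f t + ENNReal.ofReal C₂) := by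
        rw [lintegral_indicator measurableSet_Ioc, Measure.restrict_restrict measurableSet_Ioc,
          Set.inter_eq_left.mpr (fun t ht => ht.1)]
    _ = ENNReal.ofReal c₀ * (ENNReal.ofReal C₁ * (∫⁻ t in Ioc (0:ℝ) T, distFun Set.univ f t)
          + ENNReal.ofReal C₂ * volume (Ioc (0:ℝ) T)) := by
        rw [MeasureTheory.lintegral_const_mul' _ _ ENNReal.ofReal_ne_top,
          MeasureTheory.lintegral_add_right' _ aemeasurable_const,
          MeasureTheory.lintegral_const_mul' _ _ ENNReal.ofReal_ne_top,
          MeasureTheory.setLIntegral_const]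
    _ ≤ ENNReal.ofReal c₀ * (ENNReal.ofReal C₁ * ENNReal.ofReal I
          + ENNReal.ofReal C₂ * ENNReal.ofReal T) := by
        refine mul_le_mul_right (add_le_add ?_ ?_) _
        · refine mul_le_mul_right ?_ _
          rw [← layer]
          exact lintegral_mono_set Ioc_subset_Ioi_self
        · refine mul_le_mul_right ?_ _
          rw [Real.volume_Ioc, sub_zero]
    _ = ENNReal.ofReal (c₀ * (C₁ * I + C₂ * T)) := by
        rw [← ENNReal.ofReal_mul hC₁0, ← ENNReal.ofReal_mul hC₂0,
          ← ENNReal.ofReal_add (by positivity) (by positivity),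
          ← ENNReal.ofReal_mul hc₀pos.le]
    _ = ENNReal.ofReal (c₀ * T ^ (m / (d:ℝ)) * I ^ (1 - m / (d:ℝ))) := by
        congr 1
        have hTθ : 0 < T ^ θ := Real.rpow_pos_of_pos hTpos _
        have e3 : A = I ^ θ / T ^ θ := by rw [hA, hlam, Real.div_rpow hI0 hT0]
        have e4 : T ^ (m / (d:ℝ)) = T / T ^ θ := by
          rw [show m / (d:ℝ) = 1 - θ by rw [hθ]; ring, Real.rpow_sub hTpos, Real.rpow_one]
        have e5 : I ^ (1 - m / (d:ℝ)) = I ^ θ := by rw [hθ]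
        have h6 : C₁ * I + C₂ * T = A * T := by
          rw [hC₁, hC₂, hlam]
          field_simp
          ring
        rw [h6, e3, e4, e5]
        field_simp
    _ = _ := by rw [hc₀]

end Main

/-- explicit computation of `a_σ`, `b_σ`, `B_σ`, `H_σ` for
`σ(x) = |x|^m` on `ℝ^d`, and the resulting bound
`∫₀^∞ dt/H_σ(μ_f(t)) ≤ (d/m) K_d^{m/d} ‖f‖_∞^{m/d} ‖f‖₁^{1−m/d}`. -/
theorem power_weight_computation {d : ℕ} (hd : 1 ≤ d) (m : ℝ) (hm0 : 0 < m)
    (hmd : m ≤ (d : ℝ)) :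
    (∀ s : ℝ, 0 ≤ s →
      aSig Set.univ (fun x : EuclideanSpace ℝ (Fin d) => ‖x‖ ^ m) (s : EReal)
        = ENNReal.ofReal (unitBallVol d * s ^ ((d : ℝ) / m))) ∧
    (∀ s : ℝ, 0 ≤ s →
      bSig Set.univ (fun x : EuclideanSpace ℝ (Fin d) => ‖x‖ ^ m) (ENNReal.ofReal s)
        = ((unitBallVol d ^ (-(m / (d : ℝ))) * s ^ (m / (d : ℝ)) : ℝ) : EReal)) ∧
    (∀ s : ℝ, 0 ≤ s →
      BSig Set.univ (fun x : EuclideanSpace ℝ (Fin d) => ‖x‖ ^ m) s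
        = (d / (m + d)) * unitBallVol d ^ (-(m / (d : ℝ))) * s ^ (1 + m / (d : ℝ))) ∧
    (∀ μ : ℝ, 0 < μ →
      HSig Set.univ (fun x : EuclideanSpace ℝ (Fin d) => ‖x‖ ^ m) μ
        = (m / d) * unitBallVol d ^ (-(m / (d : ℝ))) * μ ^ (m / (d : ℝ) - 1)) ∧
    (∀ f : EuclideanSpace ℝ (Fin d) → ℝ, (∀ x, 0 ≤ f x) →
      MeasureTheory.Integrable f → MeasureTheory.MemLp f ⊤ volume →
      (∫⁻ t in Ioi (0 : ℝ), ENNReal.ofReal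
          ((HSig Set.univ (fun x : EuclideanSpace ℝ (Fin d) => ‖x‖ ^ m)
            ((distFun Set.univ f t).toReal))⁻¹))
        ≤ ENNReal.ofReal ((d / m) * unitBallVol d ^ (m / (d : ℝ))
            * ((MeasureTheory.eLpNorm f ⊤ volume).toReal) ^ (m / (d : ℝ))
            * (∫ x, f x) ^ (1 - m / (d : ℝ)))) := by
  exact ⟨fun s hs => aSig_eq hd hm0 hmd s hs,
    fun s hs => bSig_eq hd hm0 hmd s hs,
    fun s hs => BSig_eq hd hm0 hmd s hs,
    fun μ hμ => HSig_eq hd hm0 hmd μ hμ,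
    fun f hf0 hfi hfb => part5 hd hm0 hmd f hf0 hfi hfb⟩
end
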